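/- arXiv:2307.01788 — 6 statements merged into one kernel-verified Lean document; each statement's English description precedes it below -/
import Mathlib

section
/- For any directed family (f_i)_{i∈I} of antitonic maps from [0,∞) to [0,∞] (directed in the pointwise ordering), ∫₀^∞ sup_{i∈I} f_i(t) dt = sup_{i∈I} ∫₀^∞ f_i(t) dt, where the integrals are improper Riemann integrals of antitonic functions. -/
open scoped ENNReal NNReal

variable {X : Type*}

/-- A lattice of subsets of `X`. -/
def IsLatt (L : Set (Set X)) : Prop :=
  ∅ ∈ L ∧ Set.univ ∈ L ∧ (∀ U ∈ L, ∀ V ∈ L, U ∪ V ∈ L) ∧ (∀ U ∈ L, ∀ V ∈ L, U ∩ V ∈ L)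

/-- An ω-topology: a lattice of subsets closed under countable unions. -/
def IsOmegaTop (L : Set (Set X)) : Prop :=
  IsLatt L ∧ ∀ U : ℕ → Set X, (∀ n, U n ∈ L) → (⋃ n, U n) ∈ L

/-- A valuation on `(X, L)`: strict, monotonic, modular. -/
def IsVal (L : Set (Set X)) (ν : Set X → ℝ≥0∞) : Prop :=
  ν ∅ = 0 ∧ (∀ U ∈ L, ∀ V ∈ L, U ⊆ V → ν U ≤ ν V) ∧
    (∀ U ∈ L, ∀ V ∈ L, ν U + ν V = ν (U ∪ V) + ν (U ∩ V))

/-- ω-continuity of a valuation: it preserves suprema of monotone sequences of sets. -/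
def IsOmegaContVal (L : Set (Set X)) (ν : Set X → ℝ≥0∞) : Prop :=
  ∀ U : ℕ → Set X, (∀ n, U n ∈ L) → Monotone U → ν (⋃ n, U n) = ⨆ n, ν (U n)

/-- `𝓛(X, L)`: maps `h : X → ℝ≥0∞` with `h⁻¹((t,∞]) ∈ L` for all `t ≥ 0`. -/
def MemL (L : Set (Set X)) (h : X → ℝ≥0∞) : Prop :=
  ∀ t : ℝ≥0, {x | (t : ℝ≥0∞) < h x} ∈ L

/-- The improper Riemann integral `∫₀^∞ f(t) dt` of an antitonic map `f : ℝ≥0 → ℝ≥0∞`,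
realized as a Lebesgue integral over `(0, ∞)`. -/
noncomputable def riem (f : ℝ≥0 → ℝ≥0∞) : ℝ≥0∞ :=
  ∫⁻ t in Set.Ioi (0 : ℝ), f t.toNNReal

/-- The Choquet integral `∫ h dν = ∫₀^∞ ν(h⁻¹((t,∞])) dt`. -/
noncomputable def choquet (ν : Set X → ℝ≥0∞) (h : X → ℝ≥0∞) : ℝ≥0∞ :=
  riem fun t => ν {x | (t : ℝ≥0∞) < h x}

/-- The characteristic map of `U`. -/
noncomputable def chi (U : Set X) : X → ℝ≥0∞ :=
  U.indicator fun _ => 1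

/-- `(g·μ)(U) := ∫ χ_U·g dμ`. -/
noncomputable def densMul (g : X → ℝ≥0∞) (μ : Set X → ℝ≥0∞) (U : Set X) : ℝ≥0∞ :=
  choquet μ fun x => chi U x * g x

/-- `(g·μ)(C) = ∫₀^∞ μ(C ∩ g⁻¹((t,∞])) dt`, the explicit formula for the density valuation. -/
noncomputable def densF (g : X → ℝ≥0∞) (μ : Set X → ℝ≥0∞) (C : Set X) : ℝ≥0∞ :=
  riem fun t => μ (C ∩ {x | (t : ℝ≥0∞) < g x})

/-- The smallest algebra of subsets of `X` containing `L`. -/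
def genAlg (L : Set (Set X)) : Set (Set X) :=
  {C | ∀ A : Set (Set X),
    (L ⊆ A ∧ ∅ ∈ A ∧ (∀ S ∈ A, Sᶜ ∈ A) ∧ (∀ S ∈ A, ∀ T ∈ A, S ∪ T ∈ A)) → C ∈ A}

/-- A crescent: a difference of two elements of `L`. -/
def IsCrescent (L : Set (Set X)) (C : Set X) : Prop :=
  ∃ U ∈ L, ∃ V ∈ L, C = U \ V

/-- A signed valuation: strict and modular, real-valued. -/
def IsSignedVal (L : Set (Set X)) (ς : Set X → ℝ) : Prop :=
  ς ∅ = 0 ∧ ∀ U ∈ L, ∀ V ∈ L, ς (U ∪ V) + ς (U ∩ V) = ς U + ς V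

/-- The Hahn decomposition property of a signed valuation `ς` on `(X, L)`: stated via any
signed valuation extending `ς` to the generated algebra (such an extension is unique). -/
def HasHahn (L : Set (Set X)) (ς : Set X → ℝ) : Prop :=
  ∀ ς' : Set X → ℝ, IsSignedVal (genAlg L) ς' → (∀ U ∈ L, ς' U = ς U) →
    ∃ U ∈ L, (∀ C, IsCrescent L C → C ⊆ U → 0 ≤ ς' C) ∧
      (∀ C, IsCrescent L C → Disjoint C U → ς' C ≤ 0)

open MeasureTheory Set Filter Topology in
/-- Comparison of Riemann integrals of antitone maps that are comparable at rational points. -/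
lemma riem_mono_of_rat {g h : ℝ≥0 → ℝ≥0∞} (hg : Antitone g) (hh : Antitone h)
    (hle : ∀ q : ℚ, g (Real.toNNReal q) ≤ h (Real.toNNReal q)) : riem g ≤ riem h := by
  have hH : Antitone fun t : ℝ => h t.toNNReal :=
    fun a b hab => hh (Real.toNNReal_mono hab)
  set H : ℝ → ℝ≥0∞ := fun t => h t.toNNReal with hHdef
  have hN : Set.Countable {t | ¬ContinuousAt H t} := hH.countable_not_continuousAt
  have key : ∀ t : ℝ, 0 < t → ContinuousAt H t → g t.toNNReal ≤ H t := by
    intro t ht hcont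
    have hlt : ∀ s ∈ Ioo (0:ℝ) t, g t.toNNReal ≤ H s := by
      intro s hs
      obtain ⟨q, hq1, hq2⟩ := exists_rat_btwn hs.2
      calc g t.toNNReal ≤ g (Real.toNNReal q) := hg (Real.toNNReal_mono hq2.le)
        _ ≤ h (Real.toNNReal q) := hle q
        _ ≤ H s := hh (Real.toNNReal_mono hq1.le)
    have htend : Tendsto H (𝓝[<] t) (𝓝 (H t)) :=
      (hcont.continuousWithinAt).tendsto
    have hev : ∀ᶠ s in 𝓝[<] t, g t.toNNReal ≤ H s := by
      filter_upwards [Ioo_mem_nhdsLT_of_mem (by exact ⟨ht, le_refl t⟩ : t ∈ Ioc (0:ℝ) t)]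
        with s hs using hlt s hs
    exact ge_of_tendsto htend hev
  unfold riem
  refine lintegral_mono_ae ?_
  rw [ae_restrict_iff' measurableSet_Ioi]
  have h0 : (volume : Measure ℝ) {t | ¬ContinuousAt H t} = 0 := hN.measure_zero _
  filter_upwards [measure_eq_zero_iff_ae_notMem.mp h0] with t htN ht
  exact key t ht (by simpa using htN)

open MeasureTheory Set Filter Topology in
/-- Riemann integration is Scott-continuous in the integrated antitonic map. -/
theorem stmt4 {ι : Type*} [Nonempty ι] (f : ι → ℝ≥0 → ℝ≥0∞) (hf : ∀ i, Antitone (f i))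
    (hdir : ∀ i j : ι, ∃ k : ι, f i ≤ f k ∧ f j ≤ f k) :
    riem (fun t => ⨆ i, f i t) = ⨆ i, riem (f i) := by
  refine le_antisymm ?_ (iSup_le fun i => lintegral_mono fun t => le_iSup (fun i => f i t.toNNReal) i)
  -- approximating sequences at each point
  have hseq : ∀ x : ℝ≥0, ∃ φ : ℕ → ι, (⨆ n, f (φ n) x) = ⨆ i, f i x := by
    intro x
    obtain ⟨u, hu_mono, hu_tend, hu_mem⟩ :=
      exists_seq_tendsto_sSup (S := Set.range fun i => f i x) (Set.range_nonempty _)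
        (OrderTop.bddAbove _)
    choose φ hφ using hu_mem
    refine ⟨φ, ?_⟩
    have h1 : Tendsto u atTop (𝓝 (⨆ n, u n)) := tendsto_atTop_iSup hu_mono
    have h2 : (⨆ n, u n) = sSup (Set.range fun i => f i x) := tendsto_nhds_unique h1 hu_tend
    calc (⨆ n, f (φ n) x) = ⨆ n, u n := by simp_rw [hφ]
      _ = ⨆ i, f i x := by rw [h2, sSup_range]
  choose φ hφ using fun q : ℚ => hseq (Real.toNNReal q)
  -- countable chain
  let e : ℕ ≃ ℚ × ℕ := (Denumerable.eqv (ℚ × ℕ)).symm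
  let j : ℕ → ι := fun n => φ (e n).1 (e n).2
  choose ub hub1 hub2 using hdir
  let k : ℕ → ι := fun n => Nat.rec (j 0) (fun m km => ub km (j (m + 1))) n
  have hk1 : ∀ n, f (k n) ≤ f (k (n + 1)) := fun n => hub1 _ _
  have hk2 : ∀ n, f (j n) ≤ f (k n) := by
    intro n
    cases n with
    | zero => exact le_refl _
    | succ m => exact hub2 _ _
  have hkmono : Monotone fun n => f (k n) := monotone_nat_of_le_succ hk1
  set h : ℝ≥0 → ℝ≥0∞ := fun x => ⨆ n, f (k n) x with hhdef
  have hh : Antitone h := fun a b hab => iSup_mono fun n => hf (k n) hab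
  have hle : ∀ q : ℚ, (⨆ i, f i (Real.toNNReal q)) ≤ h (Real.toNNReal q) := by
    intro q
    rw [← hφ q]
    refine iSup_le fun n => ?_
    have hj : f (j (e.symm (q, n))) = f (φ q n) := by
      simp only [j, Equiv.apply_symm_apply]
    exact le_iSup_of_le (e.symm (q, n)) ((hj ▸ hk2 (e.symm (q, n))) _)
  have step1 : riem (fun t => ⨆ i, f i t) ≤ riem h :=
    riem_mono_of_rat (fun a b hab => iSup_mono fun i => hf i hab) hh hle
  have step2 : riem h = ⨆ n, riem (f (k n)) := by
    unfold riem
    rw [show (fun t : ℝ => h t.toNNReal) = fun t => ⨆ n, f (k n) t.toNNReal from rfl]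
    exact lintegral_iSup
      (fun n => ((hf (k n)).comp_monotone fun _ _ hab => Real.toNNReal_mono hab).measurable)
      (fun a b hab t => hkmono hab _)
  calc riem (fun t => ⨆ i, f i t) ≤ riem h := step1
    _ = ⨆ n, riem (f (k n)) := step2
    _ ≤ ⨆ i, riem (f i) := iSup_le fun n => le_iSup (fun i => riem (f i)) (k n)
end

section
/- Let (X, L) be an ω-topological space and ν an ω-continuous valuation on (X, L). Then the Choquet integral is additive in the integrated function: for all h, h' ∈ 𝓛(X, L), ∫ (h + h') dν = ∫ h dν + ∫ h' dν. -/
open scoped ENNReal NNReal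

variable {X : Type*}

section AuxChoquet
open MeasureTheory Set

lemma choquet_eq (ν : Set X → ℝ≥0∞) (h : X → ℝ≥0∞) :
    choquet ν h = ∫⁻ t in Set.Ioi (0:ℝ), ν {x | ENNReal.ofReal t < h x} := rfl

lemma memL_level {L : Set (Set X)} {f : X → ℝ≥0∞} (hf : MemL L f) (t : ℝ) :
    {x | ENNReal.ofReal t < f x} ∈ L := hf t.toNNReal

lemma level_antitone (f : X → ℝ≥0∞) {s t : ℝ} (hst : s ≤ t) :
    {x | ENNReal.ofReal t < f x} ⊆ {x | ENNReal.ofReal s < f x} :=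
  fun x hx => lt_of_le_of_lt (ENNReal.ofReal_le_ofReal hst) hx

lemma measurable_nu_level {L : Set (Set X)} {ν : Set X → ℝ≥0∞} (hν : IsVal L ν)
    {A : ℝ → Set X} (hAL : ∀ t, A t ∈ L) (hanti : ∀ ⦃s t : ℝ⦄, s ≤ t → A t ⊆ A s) :
    Measurable fun t => ν (A t) :=
  by
  have : Antitone fun t => ν (A t) := fun s t hst => hν.2.1 _ (hAL t) _ (hAL s) (hanti hst)
  exact this.measurable

/-- Key Lemma A: adding a scaled indicator adds `a * ν U` to the Choquet integral. -/
lemma lemmaA {L : Set (Set X)} (hL : IsLatt L) {ν : Set X → ℝ≥0∞} (hν : IsVal L ν)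
    {f : X → ℝ≥0∞} (hf : MemL L f) {U : Set X} (hU : U ∈ L) (a : ℝ≥0) :
    MemL L (fun x => f x + U.indicator (fun _ => (a:ℝ≥0∞)) x) ∧
    choquet ν (fun x => f x + U.indicator (fun _ => (a:ℝ≥0∞)) x) = choquet ν f + a * ν U := by
  obtain ⟨hemp, huniv, hcup, hcap⟩ := hL
  obtain ⟨hν0, hmono, hmod⟩ := hν
  set g : X → ℝ≥0∞ := fun x => f x + U.indicator (fun _ => (a:ℝ≥0∞)) x with hg
  -- level-set description
  have levelEq : ∀ c : ℝ≥0, {x | (c:ℝ≥0∞) < g x} =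
      if c < a then U ∪ {x | (c:ℝ≥0∞) < f x}
      else {x | (c:ℝ≥0∞) < f x} ∪ (U ∩ {x | ((c - a : ℝ≥0):ℝ≥0∞) < f x}) := by
    intro c
    ext x
    by_cases hx : x ∈ U
    · simp only [hg, Set.mem_setOf_eq, Set.indicator_of_mem hx]
      by_cases hca : c < a
      · simp only [if_pos hca, Set.mem_union, hx, true_or, iff_true]
        calc (c:ℝ≥0∞) < a := by exact_mod_cast hca
        _ ≤ f x + a := le_add_self
      · simp only [if_neg hca, Set.mem_union, Set.mem_inter_iff, hx, true_and,
          Set.mem_setOf_eq]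
        push_neg at hca
        have hsub : ((c - a : ℝ≥0):ℝ≥0∞) = (c:ℝ≥0∞) - (a:ℝ≥0∞) := ENNReal.coe_sub
        rw [hsub]
        have key : (c:ℝ≥0∞) - a < f x ↔ (c:ℝ≥0∞) < f x + a :=
          ENNReal.sub_lt_iff_lt_right ENNReal.coe_ne_top (by exact_mod_cast hca)
        constructor
        · intro hlt
          exact Or.inr (key.mpr hlt)
        · rintro (hlt | hlt)
          · exact lt_of_lt_of_le hlt le_self_add
          · exact key.mp hlt
    · simp only [hg, Set.mem_setOf_eq, Set.indicator_of_notMem hx, add_zero]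
      by_cases hca : c < a
      · simp [if_pos hca, hx]
      · simp [if_neg hca, hx]
  have hmemg : MemL L g := by
    intro c
    rw [levelEq c]
    split_ifs
    · exact hcup _ hU _ (hf c)
    · exact hcup _ (hf c) _ (hcap _ hU _ (hf _))
  refine ⟨hmemg, ?_⟩
  by_cases ha0 : a = 0
  · subst ha0
    have hgf : g = f := funext fun x => by simp [hg]
    rw [hgf]
    simp
  have hapos : (0:ℝ) < (a:ℝ) := by exact_mod_cast pos_iff_ne_zero.mpr ha0
  set F : ℝ → ℝ≥0∞ := fun t => ν {x | ENNReal.ofReal t < f x} with hFdef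
  set G : ℝ → ℝ≥0∞ := fun t => ν (U ∩ {x | ENNReal.ofReal t < f x}) with hGdef
  set H : ℝ → ℝ≥0∞ := fun t => ν {x | ENNReal.ofReal t < g x} with hHdef
  have hν' : IsVal L ν := ⟨hν0, hmono, hmod⟩
  have hGL : ∀ t : ℝ, U ∩ {x | ENNReal.ofReal t < f x} ∈ L :=
    fun t => hcap _ hU _ (memL_level hf t)
  have measF : Measurable F :=
    measurable_nu_level hν' (memL_level hf) (fun s t hst => level_antitone f hst)
  have measG : Measurable G :=
    measurable_nu_level hν' hGL
      (fun s t hst => inter_subset_inter_right U (level_antitone f hst))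
  have measH : Measurable H :=
    measurable_nu_level hν' (memL_level hmemg) (fun s t hst => level_antitone g hst)
  have hFeq : choquet ν f = ∫⁻ t in Ioi (0:ℝ), F t := rfl
  have hHeq : choquet ν g = ∫⁻ t in Ioi (0:ℝ), H t := rfl
  have hsplit : ∀ φ : ℝ → ℝ≥0∞, (∫⁻ t in Ioi (0:ℝ), φ t)
      = (∫⁻ t in Ioo (0:ℝ) (a:ℝ), φ t) + ∫⁻ t in Ici (a:ℝ), φ t := by
    intro φ
    rw [← Ioo_union_Ici_eq_Ioi hapos,
      lintegral_union measurableSet_Ici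
        (Set.disjoint_left.mpr fun x hx hx' => absurd hx.2 (not_lt.mpr hx'))]
  have hshift : ∀ φ : ℝ → ℝ≥0∞, (∫⁻ t in Ici (a:ℝ), φ (t - a)) = ∫⁻ t in Ioi (0:ℝ), φ t := by
    intro φ
    have hemb : MeasurableEmbedding (fun x : ℝ => x + a) :=
      (MeasurableEquiv.addRight (a:ℝ)).measurableEmbedding
    have hmp : MeasurePreserving (fun x : ℝ => x + a) volume volume :=
      measurePreserving_add_right (volume : Measure ℝ) (a:ℝ)
    have hpre : (fun x : ℝ => x + (a:ℝ)) ⁻¹' (Ici (a:ℝ)) = Ici (0:ℝ) := by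
      ext x; simp [le_add_iff_nonneg_left]
    have h1 := hmp.setLIntegral_comp_preimage_emb hemb (fun t => φ (t - a)) (Ici (a:ℝ))
    rw [hpre] at h1
    simp only [add_sub_cancel_right] at h1
    rw [← h1, restrict_Ioi_eq_restrict_Ici]
  have hHlow : ∀ t : ℝ, 0 ≤ t → t < (a:ℝ) →
      H t = ν (U ∪ {x | ENNReal.ofReal t < f x}) := by
    intro t ht hta
    have hc : t.toNNReal < a := (Real.toNNReal_lt_iff_lt_coe ht).mpr hta
    show ν {x | ((t.toNNReal : ℝ≥0) : ℝ≥0∞) < g x} = _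
    rw [levelEq t.toNNReal, if_pos hc]
    rfl
  have hHhigh : ∀ t : ℝ, (a:ℝ) ≤ t →
      H t = ν ({x | ENNReal.ofReal t < f x}
        ∪ (U ∩ {x | ENNReal.ofReal (t - a) < f x})) := by
    intro t hta
    have ht : (0:ℝ) ≤ t := le_trans hapos.le hta
    have hc : a ≤ t.toNNReal := (Real.le_toNNReal_iff_coe_le ht).mpr hta
    show ν {x | ((t.toNNReal : ℝ≥0) : ℝ≥0∞) < g x} = _
    rw [levelEq t.toNNReal, if_neg (not_lt.mpr hc)]
    have hcoe : ((t.toNNReal - a : ℝ≥0) : ℝ≥0∞) = ENNReal.ofReal (t - a) := by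
      rw [ENNReal.coe_sub, ENNReal.ofReal_sub t (a.coe_nonneg), ENNReal.ofReal_coe_nnreal]
      rfl
    rw [hcoe]
    rfl
  have I1 : (∫⁻ t in Ioo (0:ℝ) (a:ℝ), H t) + ∫⁻ t in Ioo (0:ℝ) (a:ℝ), G t
      = (a:ℝ≥0∞) * ν U + ∫⁻ t in Ioo (0:ℝ) (a:ℝ), F t := by
    rw [← lintegral_add_left measH]
    have hcg : ∫⁻ t in Ioo (0:ℝ) (a:ℝ), (H t + G t)
        = ∫⁻ t in Ioo (0:ℝ) (a:ℝ), (ν U + F t) := by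
      apply setLIntegral_congr_fun measurableSet_Ioo
      intro t ht
      beta_reduce
      rw [hHlow t ht.1.le ht.2]
      exact (hmod U hU _ (memL_level hf t)).symm
    rw [hcg, lintegral_add_left measurable_const, setLIntegral_const, Real.volume_Ioo,
      sub_zero, ENNReal.ofReal_coe_nnreal, mul_comm]
  have I2 : (∫⁻ t in Ici (a:ℝ), H t) + ∫⁻ t in Ici (a:ℝ), G t
      = (∫⁻ t in Ici (a:ℝ), F t) + ∫⁻ t in Ici (a:ℝ), G (t - a) := by
    rw [← lintegral_add_left measH, ← lintegral_add_left measF]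
    apply setLIntegral_congr_fun measurableSet_Ici
    intro t ht
    beta_reduce
    rw [hHhigh t ht]
    have hS := memL_level hf t
    have hS' := memL_level hf (t - (a:ℝ))
    have hsub : {x | ENNReal.ofReal t < f x} ⊆ {x | ENNReal.ofReal (t - (a:ℝ)) < f x} :=
      level_antitone f (sub_le_self t a.coe_nonneg)
    have hmod2 := hmod _ hS _ (hcap _ hU _ hS')
    have hinter : {x | ENNReal.ofReal t < f x}
        ∩ (U ∩ {x | ENNReal.ofReal (t - (a:ℝ)) < f x})
        = U ∩ {x | ENNReal.ofReal t < f x} := by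
      ext x
      constructor
      · rintro ⟨h1, h2, _⟩; exact ⟨h2, h1⟩
      · rintro ⟨h1, h2⟩; exact ⟨h2, h1, hsub h2⟩
    rw [hinter] at hmod2
    exact hmod2.symm
  have hGH : ∀ t : ℝ, G t ≤ H t := fun t =>
    hmono _ (hGL t) _ (memL_level hmemg t)
      (fun x hx => show ENNReal.ofReal t < g x from lt_of_lt_of_le hx.2 le_self_add)
  have hGF : ∀ t : ℝ, G t ≤ F t := fun t =>
    hmono _ (hGL t) _ (memL_level hf t) inter_subset_right
  have key : (∫⁻ t in Ioi (0:ℝ), H t) + ∫⁻ t in Ioi (0:ℝ), G t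
      = (choquet ν f + (a:ℝ≥0∞) * ν U) + ∫⁻ t in Ioi (0:ℝ), G t := by
    calc (∫⁻ t in Ioi (0:ℝ), H t) + ∫⁻ t in Ioi (0:ℝ), G t
        = ((∫⁻ t in Ioo (0:ℝ) (a:ℝ), H t) + ∫⁻ t in Ioo (0:ℝ) (a:ℝ), G t)
          + ((∫⁻ t in Ici (a:ℝ), H t) + ∫⁻ t in Ici (a:ℝ), G t) := by
          rw [hsplit H, hsplit G]; ring
      _ = ((a:ℝ≥0∞) * ν U + ∫⁻ t in Ioo (0:ℝ) (a:ℝ), F t)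
          + ((∫⁻ t in Ici (a:ℝ), F t) + ∫⁻ t in Ici (a:ℝ), G (t - a)) := by
          rw [I1, I2]
      _ = (((∫⁻ t in Ioo (0:ℝ) (a:ℝ), F t) + ∫⁻ t in Ici (a:ℝ), F t) + (a:ℝ≥0∞) * ν U)
          + ∫⁻ t in Ioi (0:ℝ), G t := by
          rw [hshift G]; ring
      _ = (choquet ν f + (a:ℝ≥0∞) * ν U) + ∫⁻ t in Ioi (0:ℝ), G t := by
          rw [hFeq, hsplit F]
  rw [hHeq]
  by_cases hGtop : (∫⁻ t in Ioi (0:ℝ), G t) = ⊤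
  · have h1 : (∫⁻ t in Ioi (0:ℝ), H t) = ⊤ :=
      eq_top_iff.mpr (hGtop ▸ lintegral_mono (fun t => hGH t))
    have h2 : (∫⁻ t in Ioi (0:ℝ), F t) = ⊤ :=
      eq_top_iff.mpr (hGtop ▸ lintegral_mono (fun t => hGF t))
    rw [h1, hFeq, h2]; simp
  · exact WithTop.add_right_cancel hGtop key

/-- The lower staircase of `h'` at cut points `P`. -/
noncomputable def stair (h' : X → ℝ≥0∞) (P : Finset ℝ≥0) (x : X) : ℝ≥0∞ :=
  P.sup fun t => if (t:ℝ≥0∞) < h' x then (t:ℝ≥0∞) else 0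

lemma stair_step {h' : X → ℝ≥0∞} {P : Finset ℝ≥0} (hP : P.Nonempty) (x : X) :
    stair h' P x = stair h' (P.erase (P.max' hP)) x
      + Set.indicator {y | ((P.max' hP : ℝ≥0) : ℝ≥0∞) < h' y}
          (fun _ => ((P.max' hP - (P.erase (P.max' hP)).sup id : ℝ≥0) : ℝ≥0∞)) x := by
  set m := P.max' hP with hm
  set P' := P.erase m with hP'
  set t' := P'.sup id with ht'
  have ht'm : t' ≤ m := Finset.sup_le fun b hb => P.le_max' b (Finset.mem_of_mem_erase hb)
  by_cases hx : ((m:ℝ≥0):ℝ≥0∞) < h' x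
  · rw [Set.indicator_of_mem (show x ∈ {y | ((m:ℝ≥0):ℝ≥0∞) < h' y} from hx)]
    have h1 : stair h' P x = ((m:ℝ≥0):ℝ≥0∞) := by
      apply le_antisymm
      · apply Finset.sup_le
        intro b hb
        split_ifs with hbx
        · exact_mod_cast P.le_max' b hb
        · exact zero_le
      · calc ((m:ℝ≥0):ℝ≥0∞)
            = (if ((m:ℝ≥0):ℝ≥0∞) < h' x then ((m:ℝ≥0):ℝ≥0∞) else 0) := (if_pos hx).symm
          _ ≤ stair h' P x := Finset.le_sup
              (f := fun t : ℝ≥0 => if (t:ℝ≥0∞) < h' x then (t:ℝ≥0∞) else 0) (P.max'_mem hP)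
    have h2 : stair h' P' x = ((t':ℝ≥0):ℝ≥0∞) := by
      apply le_antisymm
      · apply Finset.sup_le
        intro b hb
        split_ifs with hbx
        · exact_mod_cast Finset.le_sup (f := id) hb
        · exact zero_le
      · have hcoe : ((t':ℝ≥0):ℝ≥0∞) = P'.sup fun b => ((b:ℝ≥0):ℝ≥0∞) := by
          rw [ht']
          exact Finset.comp_sup_eq_sup_comp (fun p : ℝ≥0 => (p:ℝ≥0∞))
            (fun p q => ENNReal.coe_max p q) rfl
        rw [hcoe]
        apply Finset.sup_mono_fun
        intro b hb
        have hbt' : b ≤ t' := Finset.le_sup (f := id) hb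
        have hbx : ((b:ℝ≥0):ℝ≥0∞) < h' x :=
          lt_of_le_of_lt (by exact_mod_cast hbt'.trans ht'm) hx
        rw [if_pos hbx]
    rw [h1, h2, ← ENNReal.coe_add, add_tsub_cancel_of_le ht'm]
  · rw [Set.indicator_of_notMem (show x ∉ {y | ((m:ℝ≥0):ℝ≥0∞) < h' y} from hx), add_zero]
    have hins : insert m P' = P := Finset.insert_erase (P.max'_mem hP)
    have : stair h' P x = stair h' (insert m P') x := by rw [hins]
    rw [this]
    show (insert m P').sup _ = _
    rw [Finset.sup_insert, if_neg hx]
    simp [stair]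

lemma memL_zero {L : Set (Set X)} (hemp : ∅ ∈ L) : MemL L (fun _ => (0:ℝ≥0∞)) := by
  intro t
  have : {x : X | (t:ℝ≥0∞) < 0} = ∅ := by ext x; simp
  rw [this]
  exact hemp

lemma choquet_zero {ν : Set X → ℝ≥0∞} (hν0 : ν ∅ = 0) :
    choquet ν (fun _ : X => (0:ℝ≥0∞)) = 0 := by
  rw [choquet_eq]
  have hs : ∀ t : ℝ, ν {x : X | ENNReal.ofReal t < (0:ℝ≥0∞)} = 0 := by
    intro t
    have : {x : X | ENNReal.ofReal t < (0:ℝ≥0∞)} = ∅ := by ext x; simp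
    rw [this, hν0]
  simp [hs, hν0]

lemma lemmaB {L : Set (Set X)} (hL : IsLatt L) {ν : Set X → ℝ≥0∞} (hν : IsVal L ν)
    {h' : X → ℝ≥0∞} (hh' : MemL L h') (P : Finset ℝ≥0) :
    ∀ f : X → ℝ≥0∞, MemL L f →
      MemL L (fun x => f x + stair h' P x) ∧
      choquet ν (fun x => f x + stair h' P x)
        = choquet ν f + choquet ν (stair h' P) := by
  induction P using Finset.strongInduction with
  | _ P IH =>
    rcases P.eq_empty_or_nonempty with rfl | hP
    · intro f hf
      have hz : (fun x => f x + stair h' ∅ x) = f := funext fun x => by simp [stair]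
      have hz2 : stair h' (∅ : Finset ℝ≥0) = (fun _ : X => (0:ℝ≥0∞)) :=
        funext fun x => by simp [stair]
      refine ⟨by rw [hz]; exact hf, ?_⟩
      rw [hz, hz2, choquet_zero hν.1, add_zero]
    · intro f hf
      set m := P.max' hP with hm
      set P' := P.erase m with hP'm
      set b := m - P'.sup id with hb
      have hPP' : P' ⊂ P := Finset.erase_ssubset (P.max'_mem hP)
      have hVL : {y | ((m:ℝ≥0):ℝ≥0∞) < h' y} ∈ L := hh' m
      have hstep : ∀ x, stair h' P x = stair h' P' x
          + Set.indicator {y | ((m:ℝ≥0):ℝ≥0∞) < h' y} (fun _ => ((b:ℝ≥0):ℝ≥0∞)) x :=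
        fun x => stair_step hP x
      obtain ⟨hf1, hf2⟩ := IH P' hPP' f hf
      obtain ⟨h01, h02⟩ := IH P' hPP' (fun _ => 0) (memL_zero hL.1)
      obtain ⟨hA1, hA2⟩ := lemmaA hL hν hf1 hVL b
      obtain ⟨hB1, hB2⟩ := lemmaA hL hν h01 hVL b
      have hfun : (fun x => f x + stair h' P x)
          = fun x => (fun x => f x + stair h' P' x) x
              + Set.indicator {y | ((m:ℝ≥0):ℝ≥0∞) < h' y} (fun _ => ((b:ℝ≥0):ℝ≥0∞)) x := by
        funext x
        rw [hstep x]
        exact (add_assoc _ _ _).symm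
      have hfun0 : stair h' P
          = fun x => (fun x => (fun _ : X => (0:ℝ≥0∞)) x + stair h' P' x) x
              + Set.indicator {y | ((m:ℝ≥0):ℝ≥0∞) < h' y} (fun _ => ((b:ℝ≥0):ℝ≥0∞)) x := by
        funext x
        rw [hstep x]
        exact congrArg (· + _) (zero_add _).symm
      constructor
      · rw [hfun]; exact hA1
      · have e1 : choquet ν (fun x => f x + stair h' P x)
            = choquet ν f + choquet ν (stair h' P')
              + (b:ℝ≥0∞) * ν {y | ((m:ℝ≥0):ℝ≥0∞) < h' y} := by
          rw [congrArg (choquet ν) hfun, hA2, hf2]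
        have e2 : choquet ν (stair h' P)
            = choquet ν (stair h' P')
              + (b:ℝ≥0∞) * ν {y | ((m:ℝ≥0):ℝ≥0∞) < h' y} := by
          rw [congrArg (choquet ν) hfun0, hB2, h02, choquet_zero hν.1, zero_add]
        rw [e1, e2]
        ring

lemma choquet_mct {L : Set (Set X)} {ν : Set X → ℝ≥0∞} (hν : IsVal L ν)
    (hνω : IsOmegaContVal L ν) (fseq : ℕ → X → ℝ≥0∞) (hmem : ∀ n, MemL L (fseq n))
    (hmn : ∀ x, Monotone fun n => fseq n x) :
    choquet ν (fun x => ⨆ n, fseq n x) = ⨆ n, choquet ν (fseq n) := by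
  have hsetmono : ∀ t : ℝ, ∀ {n m : ℕ}, n ≤ m →
      {x | ENNReal.ofReal t < fseq n x} ⊆ {x | ENNReal.ofReal t < fseq m x} :=
    fun t n m hnm x hx => lt_of_lt_of_le hx (hmn x hnm)
  have hν2 : ∀ t : ℝ, ν {x | ENNReal.ofReal t < ⨆ n, fseq n x}
      = ⨆ n, ν {x | ENNReal.ofReal t < fseq n x} := by
    intro t
    have hlevel : {x | ENNReal.ofReal t < ⨆ n, fseq n x}
        = ⋃ n, {x | ENNReal.ofReal t < fseq n x} := by
      ext x; simp [lt_iSup_iff]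
    rw [hlevel]
    exact hνω _ (fun n => memL_level (hmem n) t)
      (fun n m hnm => hsetmono t hnm)
  rw [choquet_eq]
  calc ∫⁻ t in Ioi (0:ℝ), ν {x | ENNReal.ofReal t < (fun x => ⨆ n, fseq n x) x}
      = ∫⁻ t in Ioi (0:ℝ), ⨆ n, ν {x | ENNReal.ofReal t < fseq n x} :=
        lintegral_congr fun t => hν2 t
    _ = ⨆ n, ∫⁻ t in Ioi (0:ℝ), ν {x | ENNReal.ofReal t < fseq n x} :=
        lintegral_iSup
          (fun n => measurable_nu_level hν (memL_level (hmem n))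
            (fun s t hst => level_antitone _ hst))
          (fun n m hnm t => hν.2.1 _ (memL_level (hmem n) t) _ (memL_level (hmem m) t)
            (hsetmono t hnm))
    _ = ⨆ n, choquet ν (fseq n) := rfl

/-- An enumeration of (nonneg rational values in) `ℝ≥0`. -/
noncomputable def enn (n : ℕ) : ℝ≥0 := ((Denumerable.ofNat ℚ n : ℚ) : ℝ).toNNReal

noncomputable def Pn (n : ℕ) : Finset ℝ≥0 := (Finset.range n).image enn

lemma stair_mono (h' : X → ℝ≥0∞) (x : X) : Monotone fun n => stair h' (Pn n) x :=
  fun n m hnm => Finset.sup_mono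
    (Finset.image_subset_image (Finset.range_subset_range.mpr hnm))

lemma stair_sup (h' : X → ℝ≥0∞) (x : X) : (⨆ n, stair h' (Pn n) x) = h' x := by
  apply le_antisymm
  · apply iSup_le
    intro n
    apply Finset.sup_le
    intro t ht
    split_ifs with hlt
    · exact hlt.le
    · exact zero_le
  · apply le_of_forall_lt
    intro c hc
    obtain ⟨q, hq0, hcq, hqx⟩ := ENNReal.lt_iff_exists_rat_btwn.mp hc
    set t : ℝ≥0 := ((q:ℝ)).toNNReal with htdef
    obtain ⟨k, hk⟩ : ∃ k, Denumerable.ofNat ℚ k = q := ⟨_, Denumerable.ofNat_encode q⟩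
    have htP : t ∈ Pn (k + 1) := by
      apply Finset.mem_image.mpr
      refine ⟨k, Finset.mem_range.mpr (Nat.lt_succ_self _), ?_⟩
      rw [enn, hk]
    have hstep : ((t:ℝ≥0):ℝ≥0∞) ≤ stair h' (Pn (k + 1)) x := by
      calc ((t:ℝ≥0):ℝ≥0∞)
          = (if ((t:ℝ≥0):ℝ≥0∞) < h' x then ((t:ℝ≥0):ℝ≥0∞) else 0) := (if_pos hqx).symm
        _ ≤ _ := Finset.le_sup
            (f := fun s : ℝ≥0 => if (s:ℝ≥0∞) < h' x then (s:ℝ≥0∞) else 0) htP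
    calc c < ((t:ℝ≥0):ℝ≥0∞) := hcq
      _ ≤ stair h' (Pn (k + 1)) x := hstep
      _ ≤ ⨆ n, stair h' (Pn n) x := le_iSup (fun n => stair h' (Pn n) x) _

end AuxChoquet

open MeasureTheory Set

/-- additivity of the Choquet integral in the integrated function, for
ω-continuous valuations on ω-topological spaces. -/
theorem stmt6 (L : Set (Set X)) (hL : IsOmegaTop L) (ν : Set X → ℝ≥0∞)
    (hν : IsVal L ν) (hνω : IsOmegaContVal L ν)
    (h h' : X → ℝ≥0∞) (hh : MemL L h) (hh' : MemL L h') :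
    choquet ν (fun x => h x + h' x) = choquet ν h + choquet ν h' := by
  have hLl : IsLatt L := hL.1
  have hgmem : ∀ n, MemL L (stair h' (Pn n)) := by
    intro n
    have hmem := (lemmaB hLl hν hh' (Pn n) (fun _ => 0) (memL_zero hLl.1)).1
    have e : (fun x => (fun _ : X => (0:ℝ≥0∞)) x + stair h' (Pn n) x)
        = stair h' (Pn n) := funext fun x => zero_add _
    rwa [e] at hmem
  have hfn : ∀ n, MemL L (fun x => h x + stair h' (Pn n) x) :=
    fun n => (lemmaB hLl hν hh' (Pn n) h hh).1
  have hadd : ∀ n, choquet ν (fun x => h x + stair h' (Pn n) x)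
      = choquet ν h + choquet ν (stair h' (Pn n)) :=
    fun n => (lemmaB hLl hν hh' (Pn n) h hh).2
  have e1 : (fun x => h x + h' x)
      = fun x => ⨆ n, (h x + stair h' (Pn n) x) := by
    funext x
    rw [← ENNReal.add_iSup, stair_sup h' x]
  have hmct1 : choquet ν (fun x => ⨆ n, (h x + stair h' (Pn n) x))
      = ⨆ n, choquet ν (fun x => h x + stair h' (Pn n) x) :=
    choquet_mct hν hνω (fun n x => h x + stair h' (Pn n) x) hfn
      (fun x n m hnm => add_le_add (le_refl _) (stair_mono h' x hnm))
  have hmct2 : choquet ν (fun x => ⨆ n, stair h' (Pn n) x)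
      = ⨆ n, choquet ν (stair h' (Pn n)) :=
    choquet_mct hν hνω (fun n => stair h' (Pn n)) hgmem (fun x => stair_mono h' x)
  have eh' : (fun x => ⨆ n, stair h' (Pn n) x) = h' := funext fun x => stair_sup h' x
  calc choquet ν (fun x => h x + h' x)
      = choquet ν (fun x => ⨆ n, (h x + stair h' (Pn n) x)) := congrArg (choquet ν) e1
    _ = ⨆ n, choquet ν (fun x => h x + stair h' (Pn n) x) := hmct1
    _ = ⨆ n, (choquet ν h + choquet ν (stair h' (Pn n))) := iSup_congr hadd
    _ = choquet ν h + ⨆ n, choquet ν (stair h' (Pn n)) := (ENNReal.add_iSup _).symm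
    _ = choquet ν h + choquet ν h' := by rw [← hmct2, congrArg (choquet ν) eh']
end

section
/- Let (X, L) be an ω-topological space and ν an ω-continuous valuation. For every monotone sequence (h_n) in 𝓛(X, L), ∫ (sup_n h_n) dν = sup_n ∫ h_n dν (ω-continuity of the Choquet integral in the integrated function). -/
open scoped ENNReal NNReal

variable {X : Type*}

/-- ω-continuity of the Choquet integral in the integrated function. -/
theorem stmt7 (L : Set (Set X)) (hL : IsOmegaTop L) (ν : Set X → ℝ≥0∞)
    (hν : IsVal L ν) (hνω : IsOmegaContVal L ν)
    (h : ℕ → X → ℝ≥0∞) (hmem : ∀ n, MemL L (h n)) (hmono : Monotone h) :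
    choquet ν (fun x => ⨆ n, h n x) = ⨆ n, choquet ν (h n) := by
  set g : ℕ → ℝ → ℝ≥0∞ := fun n t => ν {x | (t.toNNReal : ℝ≥0∞) < h n x} with hg
  have hset : ∀ t : ℝ≥0, {x | (t : ℝ≥0∞) < ⨆ n, h n x} = ⋃ n, {x | (t : ℝ≥0∞) < h n x} := by
    intro t
    ext x
    simp [lt_iSup_iff]
  have hmonoset : ∀ t : ℝ≥0, Monotone (fun n => {x | (t : ℝ≥0∞) < h n x}) := by
    intro t m n hmn x hx
    exact lt_of_lt_of_le hx (hmono hmn x)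
  have hpt : ∀ t : ℝ, ν {x | (t.toNNReal : ℝ≥0∞) < ⨆ n, h n x} = ⨆ n, g n t := by
    intro t
    rw [hset]
    exact hνω _ (fun n => hmem n _) (hmonoset _)
  have hmeas : ∀ n, Measurable (g n) := by
    intro n
    have hanti : Antitone (g n) := by
      intro s t hst
      exact hν.2.1 _ (hmem n _) _ (hmem n _)
        (fun x hx => lt_of_le_of_lt (ENNReal.coe_le_coe.mpr (Real.toNNReal_mono hst)) hx)
    exact hanti.measurable
  have hmonog : Monotone g := by
    intro m n hmn t
    exact hν.2.1 _ (hmem m _) _ (hmem n _) (hmonoset _ hmn)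
  calc choquet ν (fun x => ⨆ n, h n x)
      = ∫⁻ t in Set.Ioi (0 : ℝ), ⨆ n, g n t := by
        simp only [choquet, riem]
        exact MeasureTheory.lintegral_congr fun t => hpt t
    _ = ⨆ n, ∫⁻ t in Set.Ioi (0 : ℝ), g n t := MeasureTheory.lintegral_iSup hmeas hmonog
    _ = ⨆ n, choquet ν (h n) := rfl
end

section
/- Let (X, L) be an ω-topological space, g ∈ 𝓛(X, L), and μ an ω-continuous valuation. Define (g·μ)(U) := ∫ χ_U · g dμ for U ∈ L. Then g·μ is an ω-continuous valuation on (X, L), and for every h ∈ 𝓛(X, L), ∫ h d(g·μ) = ∫ h·g dμ. -/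
open scoped ENNReal NNReal

variable {X : Type*}

section Stmt10Aux
open Set MeasureTheory



lemma meas_toNN {φ : ℝ≥0 → ℝ≥0∞} (hφ : Antitone φ) :
    Measurable fun t : ℝ => φ t.toNNReal :=
  (hφ.comp_monotone fun _ _ h => Real.toNNReal_mono h).measurable

lemma riem_mono {φ ψ : ℝ≥0 → ℝ≥0∞} (h : ∀ t, φ t ≤ ψ t) : riem φ ≤ riem ψ :=
  lintegral_mono fun _ => h _

lemma riem_congr {φ ψ : ℝ≥0 → ℝ≥0∞} (h : ∀ t, φ t = ψ t) : riem φ = riem ψ := by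
  unfold riem; congr 1; funext t; exact h _

lemma riem_zero : riem (fun _ : ℝ≥0 => (0 : ℝ≥0∞)) = 0 := by
  simp [riem]

lemma riem_add {φ ψ : ℝ≥0 → ℝ≥0∞} (hφ : Antitone φ) (_hψ : Antitone ψ) :
    riem (fun t => φ t + ψ t) = riem φ + riem ψ := by
  unfold riem
  exact lintegral_add_left (meas_toNN hφ) _

lemma riem_iSup {φ : ℕ → ℝ≥0 → ℝ≥0∞} (h : ∀ n, Antitone (φ n))
    (hmono : ∀ n t, φ n t ≤ φ (n + 1) t) :
    riem (fun t => ⨆ n, φ n t) = ⨆ n, riem (φ n) := by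
  unfold riem
  rw [← lintegral_iSup (fun n => meas_toNN (h n))
      (monotone_nat_of_le_succ fun n t => hmono n _)]

lemma riem_scale {φ : ℝ≥0 → ℝ≥0∞} (hφ : Antitone φ) {c : ℝ≥0} (hc : 0 < c) :
    riem (fun t => φ (t / c)) = c * riem φ := by
  have hc0 : (c : ℝ) ≠ 0 := by exact_mod_cast hc.ne'
  have hmeas : Measurable fun t : ℝ => φ t.toNNReal := meas_toNN hφ
  have hpre : ((fun t : ℝ => (c : ℝ)⁻¹ * t) ⁻¹' Ioi 0) = Ioi 0 := by
    ext t
    simp only [mem_preimage, mem_Ioi]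
    constructor
    · intro ht
      nlinarith [inv_pos.2 (show (0:ℝ) < c by positivity), mul_pos (inv_pos.2 (show (0:ℝ) < c by positivity)) ht]
    · intro ht
      positivity
  have key : (∫⁻ t in Ioi (0:ℝ), φ ((c:ℝ)⁻¹ * t).toNNReal) = c * ∫⁻ t in Ioi (0:ℝ), φ t.toNNReal := by
    have h1 : (∫⁻ t in Ioi (0:ℝ), φ ((c:ℝ)⁻¹ * t).toNNReal)
        = ∫⁻ t in (fun t : ℝ => (c : ℝ)⁻¹ * t) ⁻¹' Ioi 0, φ ((c:ℝ)⁻¹ * t).toNNReal := by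
      rw [hpre]
    rw [h1, ← setLIntegral_map measurableSet_Ioi hmeas (measurable_const_mul _)]
    rw [Real.map_volume_mul_left (inv_ne_zero hc0)]
    rw [Measure.restrict_smul, lintegral_smul_measure]
    congr 1
    rw [inv_inv, abs_of_nonneg (by positivity : (0:ℝ) ≤ (c:ℝ))]
    exact ENNReal.ofReal_coe_nnreal
  calc riem (fun t => φ (t / c)) = ∫⁻ t in Ioi (0:ℝ), φ ((c:ℝ)⁻¹ * t).toNNReal := by
        unfold riem
        refine setLIntegral_congr_fun measurableSet_Ioi (fun t ht => ?_)
        congr 1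
        rw [show (c:ℝ)⁻¹ * t = t / (c:ℝ) by ring, Real.toNNReal_div (le_of_lt ht),
          Real.toNNReal_coe]
    _ = c * riem φ := key

lemma riem_ind_one (a : ℝ≥0∞) :
    riem (fun t : ℝ≥0 => if (t : ℝ≥0∞) < 1 then a else 0) = a := by
  unfold riem
  have : (∫⁻ t in Ioi (0:ℝ), if ((t.toNNReal : ℝ≥0∞)) < 1 then a else 0)
      = ∫⁻ t in Ioi (0:ℝ), (Iio (1:ℝ)).indicator (fun _ => a) t := by
    refine setLIntegral_congr_fun measurableSet_Ioi (fun t ht => ?_)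
    have : ((t.toNNReal : ℝ≥0∞) < 1) ↔ t < 1 := by
      rw [show ((1:ℝ≥0∞)) = ((1:ℝ≥0) : ℝ≥0∞) by norm_num, ENNReal.coe_lt_coe]
      rw [NNReal.coe_lt_coe.symm, Real.coe_toNNReal _ (le_of_lt ht)]
      norm_num
    by_cases h : t < 1 <;> simp [this, h, indicator_of_mem, Set.indicator]
  rw [this, lintegral_indicator measurableSet_Iio, Measure.restrict_restrict measurableSet_Iio]
  have : (Iio (1:ℝ)) ∩ Ioi 0 = Ioo (0:ℝ) 1 := by ext t; simp [and_comm]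
  rw [this, setLIntegral_const, Real.volume_Ioo]
  norm_num


section Latt

variable {L : Set (Set X)} {μ : Set X → ℝ≥0∞} {g : X → ℝ≥0∞}

lemma latt_biUnion (hL : IsLatt L) {ι : Type} (s : Finset ι) (V : ι → Set X)
    (hV : ∀ i ∈ s, V i ∈ L) : (⋃ i ∈ s, V i) ∈ L := by
  classical
  induction s using Finset.induction_on with
  | empty => simpa using hL.1
  | @insert a s ha ih =>
    rw [Finset.set_biUnion_insert]
    exact hL.2.2.1 _ (hV a (Finset.mem_insert_self _ _)) _
      (ih fun i hi => hV i (Finset.mem_insert_of_mem hi))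

lemma gset_anti (g : X → ℝ≥0∞) : Antitone fun t : ℝ≥0 => {x | (t : ℝ≥0∞) < g x} := by
  intro s t h x hx
  exact lt_of_le_of_lt (ENNReal.coe_le_coe.2 h) hx

lemma anti_mu (hμ : IsVal L μ) {S : ℝ≥0 → Set X} (hSL : ∀ t, S t ∈ L) (hS : Antitone S) :
    Antitone fun t => μ (S t) :=
  fun s t hst => hμ.2.1 _ (hSL t) _ (hSL s) (hS hst)

lemma densMul_eq_densF (g : X → ℝ≥0∞) (μ : Set X → ℝ≥0∞) (U : Set X) :
    densMul g μ U = densF g μ U := by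
  unfold densMul densF choquet
  refine riem_congr fun t => ?_
  congr 1
  ext x
  by_cases hx : x ∈ U
  · simp [chi, indicator_of_mem hx, hx]
  · simp [chi, indicator_of_notMem hx, hx]

lemma isVal_densF (hL : IsLatt L) (hg : MemL L g) (hμ : IsVal L μ) :
    IsVal L (densF g μ) := by
  have hmemI : ∀ (S : Set X), S ∈ L → ∀ t : ℝ≥0, S ∩ {x | (t : ℝ≥0∞) < g x} ∈ L :=
    fun S hS t => hL.2.2.2 _ hS _ (hg t)
  have hanti : ∀ (S : Set X), S ∈ L →
      Antitone fun t : ℝ≥0 => μ (S ∩ {x | (t : ℝ≥0∞) < g x}) := by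
    intro S hS
    exact anti_mu hμ (hmemI S hS) fun s t hst => inter_subset_inter_right _ (gset_anti g hst)
  refine ⟨?_, ?_, ?_⟩
  · unfold densF
    rw [riem_congr (show ∀ t : ℝ≥0, μ (∅ ∩ {x | (t : ℝ≥0∞) < g x}) = 0 from
      fun t => by rw [Set.empty_inter]; exact hμ.1), riem_zero]
  · intro U hU V hV hUV
    exact riem_mono fun t => hμ.2.1 _ (hmemI U hU t) _ (hmemI V hV t)
      (inter_subset_inter_left _ hUV)
  · intro U hU V hV
    unfold densF
    rw [← riem_add (hanti U hU) (hanti V hV), ← riem_add (hanti _ (hL.2.2.1 _ hU _ hV))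
      (hanti _ (hL.2.2.2 _ hU _ hV))]
    refine riem_congr fun t => ?_
    have := hμ.2.2 _ (hmemI U hU t) _ (hmemI V hV t)
    rw [← Set.union_inter_distrib_right, ← Set.inter_inter_distrib_right] at this
    exact this

lemma omegaCont_densF (hL : IsLatt L) (hg : MemL L g) (hμ : IsVal L μ)
    (hμω : IsOmegaContVal L μ) : IsOmegaContVal L (densF g μ) := by
  intro U hU hmono
  unfold densF
  have hpt : ∀ t : ℝ≥0, μ ((⋃ n, U n) ∩ {x | (t : ℝ≥0∞) < g x})
      = ⨆ n, μ (U n ∩ {x | (t : ℝ≥0∞) < g x}) := by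
    intro t
    rw [Set.iUnion_inter]
    exact hμω _ (fun n => hL.2.2.2 _ (hU n) _ (hg t))
      (fun m n hmn => inter_subset_inter_left _ (hmono hmn))
  rw [riem_congr hpt]
  refine riem_iSup (fun n => anti_mu hμ (fun t => hL.2.2.2 _ (hU n) _ (hg t))
      (fun s t hst => inter_subset_inter_right _ (gset_anti g hst))) ?_
  intro n t
  exact hμ.2.1 _ (hL.2.2.2 _ (hU n) _ (hg t)) _ (hL.2.2.2 _ (hU (n+1)) _ (hg t))
    (inter_subset_inter_left _ (hmono (Nat.le_succ n)))

lemma choquet_iSup (hν : IsVal L ν) (hνω : IsOmegaContVal L ν)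
    {f : ℕ → X → ℝ≥0∞} (hfL : ∀ n, MemL L (f n)) (hstep : ∀ n x, f n x ≤ f (n + 1) x) :
    choquet ν (fun x => ⨆ n, f n x) = ⨆ n, choquet ν (f n) := by
  unfold choquet
  have hpt : ∀ t : ℝ≥0, ν {x | (t : ℝ≥0∞) < ⨆ n, f n x}
      = ⨆ n, ν {x | (t : ℝ≥0∞) < f n x} := by
    intro t
    rw [show {x | (t : ℝ≥0∞) < ⨆ n, f n x} = ⋃ n, {x | (t : ℝ≥0∞) < f n x} by
      ext x; simp [lt_iSup_iff]]
    exact hνω _ (fun n => hfL n t)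
      (monotone_nat_of_le_succ fun n x hx => lt_of_lt_of_le hx (hstep n x))
  rw [riem_congr hpt]
  refine riem_iSup (fun n s t hst => hν.2.1 _ (hfL n t) _ (hfL n s)
      (fun x hx => lt_of_le_of_lt (ENNReal.coe_le_coe.2 hst) hx)) ?_
  intro n t
  exact hν.2.1 _ (hfL n t) _ (hfL (n+1) t) (fun x hx => lt_of_lt_of_le hx (hstep n x))

end Latt

section Step

variable {L : Set (Set X)} {μ : Set X → ℝ≥0∞} {g : X → ℝ≥0∞}

/-- step function along a chain -/
noncomputable def stepf (δ : ℝ≥0) (K : ℕ) (U : ℕ → Set X) (x : X) : ℝ≥0∞ :=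
  ⨆ k ∈ Finset.Icc 1 K, (U k).indicator (fun _ => (((k : ℝ≥0) * δ : ℝ≥0) : ℝ≥0∞)) x

lemma stepf_level {δ : ℝ≥0} (hδ : 0 < δ) (K : ℕ) (U : ℕ → Set X) (g : X → ℝ≥0∞)
    (t : ℝ≥0) :
    {x | (t : ℝ≥0∞) < stepf δ K U x * g x}
      = ⋃ k ∈ Finset.Icc 1 K, (U k ∩ {x | ((t / ((k : ℝ≥0) * δ) : ℝ≥0) : ℝ≥0∞) < g x}) := by
  ext x
  simp only [mem_setOf_eq, stepf, ENNReal.iSup_mul, mem_iUnion, mem_inter_iff, lt_iSup_iff,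
    exists_prop]
  constructor
  · rintro ⟨k, hk, hlt⟩
    by_cases hx : x ∈ U k
    · rw [indicator_of_mem hx] at hlt
      have hkδ : ((k : ℝ≥0) * δ) ≠ 0 := by
        have h1 : (1 : ℕ) ≤ k := (Finset.mem_Icc.1 hk).1
        positivity
      refine ⟨k, hk, hx, ?_⟩
      rw [ENNReal.coe_div hkδ]
      rw [ENNReal.div_lt_iff (Or.inl (by exact_mod_cast hkδ)) (Or.inl ENNReal.coe_ne_top)]
      rwa [mul_comm]
    · rw [indicator_of_notMem hx, zero_mul] at hlt
      exact absurd hlt (by simp)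
  · rintro ⟨k, hk, hx, hlt⟩
    refine ⟨k, hk, ?_⟩
    rw [indicator_of_mem hx]
    have hkδ : ((k : ℝ≥0) * δ) ≠ 0 := by
      have h1 : (1 : ℕ) ≤ k := (Finset.mem_Icc.1 hk).1
      positivity
    rw [ENNReal.coe_div hkδ] at hlt
    rw [ENNReal.div_lt_iff (Or.inl (by exact_mod_cast hkδ)) (Or.inl ENNReal.coe_ne_top)] at hlt
    rwa [mul_comm] at hlt

lemma chain_int (hL : IsLatt L) (hμ : IsVal L μ) (hg : MemL L g)
    {δ : ℝ≥0} (hδ : 0 < δ) (U : ℕ → Set X) (hUL : ∀ k, U k ∈ L)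
    (hchain : ∀ k, U (k + 1) ⊆ U k) (K : ℕ) :
    riem (fun t => μ (⋃ k ∈ Finset.Icc 1 K,
        (U k ∩ {x | ((t / ((k : ℝ≥0) * δ) : ℝ≥0) : ℝ≥0∞) < g x})))
      = ∑ k ∈ Finset.Icc 1 K, δ * riem (fun t => μ (U k ∩ {x | (t : ℝ≥0∞) < g x})) := by
  -- notation
  set Vk : ℕ → ℝ≥0 → Set X :=
    fun k t => U k ∩ {x | ((t / ((k : ℝ≥0) * δ) : ℝ≥0) : ℝ≥0∞) < g x} with hVk
  have hUsub : ∀ j k, j ≤ k → U k ⊆ U j := by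
    intro j k hjk
    induction k with
    | zero => have : j = 0 := Nat.le_zero.1 hjk; subst this; exact fun x h => h
    | succ k ih =>
      rcases Nat.lt_or_ge j (k+1) with h | h
      · exact fun x hx => ih (Nat.lt_succ_iff.1 h) (hchain k hx)
      · have : j = k + 1 := le_antisymm hjk h
        subst this; exact fun x h => h
  have hkδpos : ∀ k : ℕ, 1 ≤ k → (0 : ℝ≥0) < (k : ℝ≥0) * δ := by
    intro k hk
    have : (1 : ℝ≥0) ≤ (k : ℝ≥0) := by exact_mod_cast hk
    positivity
  have hVL : ∀ k t, 1 ≤ k → Vk k t ∈ L := fun k t _ => hL.2.2.2 _ (hUL k) _ (hg _)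
  have hVanti : ∀ k, 1 ≤ k → Antitone (Vk k) := by
    intro k hk s t hst
    exact inter_subset_inter_right _ (gset_anti g (by gcongr))
  have hAL : ∀ (K : ℕ) (t : ℝ≥0), (⋃ k ∈ Finset.Icc 1 K, Vk k t) ∈ L := fun K t =>
    latt_biUnion hL _ _ (fun k hk => hVL k t (Finset.mem_Icc.1 hk).1)
  have hAanti : ∀ K : ℕ, Antitone (fun t => ⋃ k ∈ Finset.Icc 1 K, Vk k t) := by
    intro K s t hst
    exact Set.iUnion₂_mono fun k hk => hVanti k (Finset.mem_Icc.1 hk).1 hst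
  have hmuAanti : ∀ K : ℕ, Antitone (fun t => μ (⋃ k ∈ Finset.Icc 1 K, Vk k t)) :=
    fun K => anti_mu hμ (hAL K) (hAanti K)
  have hφanti : ∀ k : ℕ, Antitone (fun s : ℝ≥0 => μ (U k ∩ {x | (s : ℝ≥0∞) < g x})) :=
    fun k => anti_mu hμ (fun t => hL.2.2.2 _ (hUL k) _ (hg t))
      (fun s t hst => inter_subset_inter_right _ (gset_anti g hst))
  have hJmono : ∀ k : ℕ, riem (fun s : ℝ≥0 => μ (U (k+1) ∩ {x | (s : ℝ≥0∞) < g x}))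
      ≤ riem (fun s : ℝ≥0 => μ (U k ∩ {x | (s : ℝ≥0∞) < g x})) := fun k =>
    riem_mono fun t =>
      hμ.2.1 _ (hL.2.2.2 _ (hUL (k+1)) _ (hg t)) _ (hL.2.2.2 _ (hUL k) _ (hg t))
        (inter_subset_inter_left _ (hchain k))
  have hscaleV : ∀ k : ℕ, 1 ≤ k → riem (fun t => μ (Vk k t))
      = (((k : ℝ≥0) * δ : ℝ≥0) : ℝ≥0∞)
        * riem (fun s : ℝ≥0 => μ (U k ∩ {x | (s : ℝ≥0∞) < g x})) :=
    fun k hk => riem_scale (hφanti k) (hkδpos k hk)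
  induction K with
  | zero =>
    have h0 : ∀ t : ℝ≥0, μ (⋃ k ∈ Finset.Icc 1 0, Vk k t) = 0 := by
      intro t
      rw [show Finset.Icc 1 0 = ∅ by rfl]
      simpa using hμ.1
    rw [riem_congr h0, riem_zero, show Finset.Icc 1 0 = ∅ by rfl, Finset.sum_empty]
  | succ K ih =>
    have hIcc : Finset.Icc 1 (K+1) = insert (K+1) (Finset.Icc 1 K) := by
      ext m; simp only [Finset.mem_Icc, Finset.mem_insert]; omega
    rcases Nat.eq_zero_or_pos K with rfl | hKpos
    · have hU1 : ∀ t : ℝ≥0, μ (⋃ k ∈ Finset.Icc 1 1, Vk k t) = μ (Vk 1 t) := by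
        intro t
        rw [show Finset.Icc 1 1 = {1} from Finset.Icc_self 1]
        simp
      rw [riem_congr hU1, show Finset.Icc 1 1 = {1} from Finset.Icc_self 1,
        Finset.sum_singleton, hscaleV 1 le_rfl]
      norm_num
    · have hinter : ∀ t : ℝ≥0, Vk (K+1) t ∩ (⋃ k ∈ Finset.Icc 1 K, Vk k t)
          = U (K+1) ∩ {x | ((t / ((K : ℝ≥0) * δ) : ℝ≥0) : ℝ≥0∞) < g x} := by
        intro t
        ext x
        simp only [hVk, mem_inter_iff, mem_iUnion, exists_prop, mem_setOf_eq, Finset.mem_Icc]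
        constructor
        · rintro ⟨⟨hxU, _⟩, k, ⟨hk1, hkK⟩, _, hltk⟩
          refine ⟨hxU, lt_of_le_of_lt (ENNReal.coe_le_coe.2 ?_) hltk⟩
          have hkk : (k : ℝ≥0) * δ ≤ (K : ℝ≥0) * δ := by
            have : (k : ℝ≥0) ≤ (K : ℝ≥0) := by exact_mod_cast hkK
            gcongr
          gcongr
        · rintro ⟨hxU, hlt⟩
          have hle : (t / ((K+1 : ℕ) * δ) : ℝ≥0) ≤ t / ((K : ℝ≥0) * δ) := by
            have h1 : ((K : ℝ≥0)) * δ ≤ ((K+1 : ℕ) : ℝ≥0) * δ := by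
              have : ((K : ℝ≥0)) ≤ ((K+1 : ℕ) : ℝ≥0) := by exact_mod_cast Nat.le_succ K
              gcongr
            gcongr
          exact ⟨⟨hxU, lt_of_le_of_lt (ENNReal.coe_le_coe.2 hle) hlt⟩,
            K, ⟨hKpos, le_rfl⟩, hchain K hxU, hlt⟩
      have hAunion : ∀ t : ℝ≥0, (⋃ k ∈ Finset.Icc 1 (K+1), Vk k t)
          = Vk (K+1) t ∪ ⋃ k ∈ Finset.Icc 1 K, Vk k t := by
        intro t; rw [hIcc, Finset.set_biUnion_insert]
      have hpoint : ∀ t : ℝ≥0, μ (⋃ k ∈ Finset.Icc 1 (K+1), Vk k t)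
            + μ (U (K+1) ∩ {x | ((t / ((K : ℝ≥0) * δ) : ℝ≥0) : ℝ≥0∞) < g x})
          = μ (Vk (K+1) t) + μ (⋃ k ∈ Finset.Icc 1 K, Vk k t) := by
        intro t
        rw [hAunion t, ← hinter t]
        exact (hμ.2.2 _ (hVL (K+1) t (by omega)) _ (hAL K t)).symm
      have hanti2 : Antitone fun t : ℝ≥0 =>
          μ (U (K+1) ∩ {x | ((t / ((K : ℝ≥0) * δ) : ℝ≥0) : ℝ≥0∞) < g x}) :=
        anti_mu hμ (fun t => hL.2.2.2 _ (hUL _) _ (hg _))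
          (fun s t hst => inter_subset_inter_right _ (gset_anti g (by gcongr)))
      have hanti3 : Antitone fun t => μ (Vk (K+1) t) :=
        fun s t hst => anti_mu hμ (fun r => hVL (K+1) r (by omega))
          (hVanti (K+1) (by omega)) hst
      have hEq : riem (fun t => μ (⋃ k ∈ Finset.Icc 1 (K+1), Vk k t))
            + riem (fun t : ℝ≥0 =>
                μ (U (K+1) ∩ {x | ((t / ((K : ℝ≥0) * δ) : ℝ≥0) : ℝ≥0∞) < g x}))
          = riem (fun t => μ (Vk (K+1) t))
            + riem (fun t => μ (⋃ k ∈ Finset.Icc 1 K, Vk k t)) := by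
        rw [← riem_add (hmuAanti (K+1)) hanti2, ← riem_add hanti3 (hmuAanti K)]
        exact riem_congr hpoint
      have hscale2 : riem (fun t : ℝ≥0 =>
            μ (U (K+1) ∩ {x | ((t / ((K : ℝ≥0) * δ) : ℝ≥0) : ℝ≥0∞) < g x}))
          = (((K : ℝ≥0) * δ : ℝ≥0) : ℝ≥0∞)
            * riem (fun s : ℝ≥0 => μ (U (K+1) ∩ {x | (s : ℝ≥0∞) < g x})) :=
        riem_scale (hφanti (K+1)) (hkδpos K hKpos)
      rw [hscale2, hscaleV (K+1) (by omega)] at hEq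
      set J' : ℝ≥0∞ := riem (fun s : ℝ≥0 => μ (U (K+1) ∩ {x | (s : ℝ≥0∞) < g x})) with hJ'
      set T : ℝ≥0∞ := riem (fun t => μ (⋃ k ∈ Finset.Icc 1 K, Vk k t)) with hT
      set T' : ℝ≥0∞ := riem (fun t => μ (⋃ k ∈ Finset.Icc 1 (K+1), Vk k t)) with hT'
      rw [show (∑ k ∈ Finset.Icc 1 (K+1), (δ : ℝ≥0∞)
            * riem (fun t => μ (U k ∩ {x | (t : ℝ≥0∞) < g x})))
          = (δ : ℝ≥0∞) * J' + ∑ k ∈ Finset.Icc 1 K, (δ : ℝ≥0∞)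
            * riem (fun t => μ (U k ∩ {x | (t : ℝ≥0∞) < g x})) from by
        rw [hIcc, Finset.sum_insert (by simp only [Finset.mem_Icc]; omega)]]
      rw [← ih]
      have hcast : ((((K+1 : ℕ) : ℝ≥0) * δ : ℝ≥0) : ℝ≥0∞)
          = (((K : ℝ≥0) * δ : ℝ≥0) : ℝ≥0∞) + (δ : ℝ≥0∞) := by
        push_cast; ring
      rw [hcast] at hEq
      by_cases hJtop : J' = ⊤
      · have hVKtop : riem (fun t => μ (Vk K t)) = ⊤ := by
          rw [hscaleV K hKpos]
          rw [eq_top_iff]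
          calc (⊤ : ℝ≥0∞) = (((K : ℝ≥0) * δ : ℝ≥0) : ℝ≥0∞) * J' := by
                rw [hJtop, ENNReal.mul_top
                  (by exact_mod_cast (hkδpos K hKpos).ne')]
            _ ≤ _ := by
                gcongr
                exact hJ' ▸ hJmono K
        have hTtop : T = ⊤ := by
          rw [eq_top_iff, ← hVKtop]
          refine riem_mono fun t => hμ.2.1 _ (hVL K t hKpos) _ (hAL K t) ?_
          intro y hy
          exact Set.mem_iUnion₂.2 ⟨K, Finset.mem_Icc.2 ⟨hKpos, le_rfl⟩, hy⟩
        have hT'top : T' = ⊤ := by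
          rw [eq_top_iff, ← hTtop, hT, hT']
          refine riem_mono fun t => hμ.2.1 _ (hAL K t) _ (hAL (K+1) t) ?_
          intro y hy
          rw [hAunion t]
          exact Set.mem_union_right _ hy
        rw [hT'top, hTtop, add_top]
      · have hfin : (((K : ℝ≥0) * δ : ℝ≥0) : ℝ≥0∞) * J' ≠ ⊤ :=
          ENNReal.mul_ne_top ENNReal.coe_ne_top hJtop
        have hEq2 : T' + (((K : ℝ≥0) * δ : ℝ≥0) : ℝ≥0∞) * J'
            = ((δ : ℝ≥0∞) * J' + T) + (((K : ℝ≥0) * δ : ℝ≥0) : ℝ≥0∞) * J' := by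
          rw [hEq]; ring
        exact (ENNReal.add_left_inj hfin).1 hEq2

noncomputable def dyd (n : ℕ) : ℝ≥0 := ((2 : ℝ≥0) ^ n)⁻¹

def UL (h : X → ℝ≥0∞) (n k : ℕ) : Set X := {y | (((k : ℝ≥0) * dyd n : ℝ≥0) : ℝ≥0∞) < h y}

noncomputable def approxL (h : X → ℝ≥0∞) (n : ℕ) : X → ℝ≥0∞ :=
  stepf (dyd n) (n * 2 ^ n) (UL h n)

lemma dyd_pos (n : ℕ) : 0 < dyd n := by unfold dyd; positivity

lemma dyd_succ (k n : ℕ) : ((2 * k : ℕ) : ℝ≥0) * dyd (n + 1) = (k : ℝ≥0) * dyd n := by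
  unfold dyd
  push_cast
  rw [pow_succ]
  rw [mul_inv]
  ring_nf

lemma UL_chain (h : X → ℝ≥0∞) (n k : ℕ) : UL h n (k + 1) ⊆ UL h n k := by
  intro x hx
  simp only [UL, mem_setOf_eq] at hx ⊢
  refine lt_of_le_of_lt (ENNReal.coe_le_coe.2 ?_) hx
  have : ((k : ℝ≥0)) ≤ ((k + 1 : ℕ) : ℝ≥0) := by exact_mod_cast Nat.le_succ k
  gcongr

lemma approxL_step (h : X → ℝ≥0∞) (n : ℕ) (x : X) : approxL h n x ≤ approxL h (n + 1) x := by
  unfold approxL stepf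
  refine iSup₂_le fun k hk => ?_
  by_cases hx : x ∈ UL h n k
  · rw [indicator_of_mem hx]
    have hk' : 2 * k ∈ Finset.Icc 1 ((n + 1) * 2 ^ (n + 1)) := by
      simp only [Finset.mem_Icc] at hk ⊢
      constructor
      · omega
      · calc 2 * k ≤ 2 * (n * 2 ^ n) := by omega
          _ = n * 2 ^ (n + 1) := by ring
          _ ≤ (n + 1) * 2 ^ (n + 1) := by gcongr <;> omega
    have hxx : x ∈ UL h (n + 1) (2 * k) := by
      simp only [UL, mem_setOf_eq] at hx ⊢
      rwa [dyd_succ k n]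
    refine le_trans ?_ (le_iSup₂ (2 * k) hk')
    rw [indicator_of_mem hxx, dyd_succ k n]
  · rw [indicator_of_notMem hx]
    exact zero_le

lemma approxL_le (h : X → ℝ≥0∞) (n : ℕ) (x : X) : approxL h n x ≤ h x := by
  unfold approxL stepf
  refine iSup₂_le fun k hk => ?_
  by_cases hx : x ∈ UL h n k
  · rw [indicator_of_mem hx]
    exact le_of_lt hx
  · rw [indicator_of_notMem hx]
    exact zero_le

lemma iSup_approxL (h : X → ℝ≥0∞) (x : X) : ⨆ n, approxL h n x = h x := by
  refine le_antisymm (iSup_le fun n => approxL_le h n x) ?_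
  refine ENNReal.le_of_forall_nnreal_lt fun r hr => ?_
  obtain ⟨c, hrc, hch⟩ := ENNReal.lt_iff_exists_nnreal_btwn.1 hr
  have hrc' : r < c := by exact_mod_cast hrc
  obtain ⟨n1, hn1⟩ := exists_nat_gt (c : ℝ≥0)
  obtain ⟨n2, hn2⟩ := exists_nat_gt ((c - r)⁻¹ : ℝ≥0)
  set n := max n1 n2 with hn
  have hcn : (c : ℝ≥0) < n := lt_of_lt_of_le hn1 (by exact_mod_cast le_max_left n1 n2)
  have hinv : ((c - r)⁻¹ : ℝ≥0) < n :=
    lt_of_lt_of_le hn2 (by exact_mod_cast le_max_right n1 n2)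
  have h2n : (n : ℝ≥0) < (2 : ℝ≥0) ^ n := by
    have := Nat.lt_two_pow_self (n := n)
    exact_mod_cast this
  have hdpos := dyd_pos n
  have hcr : (0 : ℝ≥0) < c - r := tsub_pos_of_lt hrc'
  have hdn : dyd n < c - r := by
    unfold dyd
    have hlt : ((c - r)⁻¹ : ℝ≥0) < (2 : ℝ≥0) ^ n := lt_trans hinv h2n
    have := inv_strictAnti₀ (by positivity) hlt
    rwa [inv_inv] at this
  set k := ⌊(r / dyd n : ℝ≥0)⌋₊ + 1 with hkdef
  have hk1 : r < (k : ℝ≥0) * dyd n := by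
    have hfl := Nat.lt_floor_add_one (r / dyd n)
    calc r = (r / dyd n) * dyd n := by rw [div_mul_cancel₀ _ hdpos.ne']
      _ < ((⌊(r / dyd n : ℝ≥0)⌋₊ : ℝ≥0) + 1) * dyd n := by gcongr
      _ = (k : ℝ≥0) * dyd n := by rw [hkdef]; push_cast; ring
  have hk2 : (k : ℝ≥0) * dyd n < c := by
    have hfl : ((⌊(r / dyd n : ℝ≥0)⌋₊ : ℝ≥0)) ≤ r / dyd n := Nat.floor_le zero_le
    calc (k : ℝ≥0) * dyd n = (⌊(r / dyd n : ℝ≥0)⌋₊ : ℝ≥0) * dyd n + dyd n := by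
          rw [hkdef]; push_cast; ring
      _ ≤ (r / dyd n) * dyd n + dyd n := by gcongr
      _ = r + dyd n := by rw [div_mul_cancel₀ _ hdpos.ne']
      _ < r + (c - r) := by gcongr
      _ = c := by rw [add_tsub_cancel_of_le hrc'.le]
  have hkK : k ≤ n * 2 ^ n := by
    have h1 : (k : ℝ≥0) < c * 2 ^ n := by
      have h2 := hk2
      unfold dyd at h2
      rw [← div_eq_mul_inv] at h2
      exact (div_lt_iff₀ (by positivity)).1 h2
    have h2 : (c : ℝ≥0) * 2 ^ n ≤ (n : ℝ≥0) * 2 ^ n := mul_le_mul_left hcn.le _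
    have h3 : (k : ℝ≥0) < ((n * 2 ^ n : ℕ) : ℝ≥0) := by
      exact_mod_cast lt_of_lt_of_le h1 h2
    exact (Nat.cast_lt.1 h3).le
  have hxk : x ∈ UL h n k := by
    simp only [UL, mem_setOf_eq]
    exact lt_trans (ENNReal.coe_lt_coe.2 hk2) hch
  have hk1' : 1 ≤ k := by omega
  calc (r : ℝ≥0∞) ≤ (((k : ℝ≥0) * dyd n : ℝ≥0) : ℝ≥0∞) := ENNReal.coe_le_coe.2 hk1.le
    _ ≤ approxL h n x := by
        unfold approxL stepf
        refine le_trans ?_ (le_iSup₂ k (Finset.mem_Icc.2 ⟨hk1', hkK⟩))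
        rw [indicator_of_mem hxk]
    _ ≤ ⨆ m, approxL h m x := le_iSup (fun m => approxL h m x) n

section Fin

variable {L : Set (Set X)} {g : X → ℝ≥0∞}

lemma memL_one (hL : IsLatt L) : MemL L (fun _ : X => (1 : ℝ≥0∞)) := by
  intro t
  by_cases h : (t : ℝ≥0∞) < 1
  · rw [show {x : X | (t : ℝ≥0∞) < (fun _ : X => (1 : ℝ≥0∞)) x} = univ from
      eq_univ_of_forall fun x => h]
    exact hL.2.1
  · rw [show {x : X | (t : ℝ≥0∞) < (fun _ : X => (1 : ℝ≥0∞)) x} = ∅ from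
      eq_empty_iff_forall_notMem.2 fun x hx => h hx]
    exact hL.1

lemma memL_stepf_mul (hL : IsLatt L) (hg : MemL L g) {δ : ℝ≥0} (hδ : 0 < δ) (K : ℕ)
    {U : ℕ → Set X} (hU : ∀ k, U k ∈ L) :
    MemL L (fun x => stepf δ K U x * g x) := by
  intro t
  rw [show {x | (t : ℝ≥0∞) < stepf δ K U x * g x}
      = ⋃ k ∈ Finset.Icc 1 K, (U k ∩ {x | ((t / ((k : ℝ≥0) * δ) : ℝ≥0) : ℝ≥0∞) < g x}) from
    stepf_level hδ K U g t]
  exact latt_biUnion hL _ _ fun k hk => hL.2.2.2 _ (hU k) _ (hg _)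

lemma memL_stepf (hL : IsLatt L) {δ : ℝ≥0} (hδ : 0 < δ) (K : ℕ)
    {U : ℕ → Set X} (hU : ∀ k, U k ∈ L) :
    MemL L (stepf δ K U) := by
  intro t
  have heq : {x | (t : ℝ≥0∞) < stepf δ K U x}
      = {x | (t : ℝ≥0∞) < stepf δ K U x * (fun _ : X => (1 : ℝ≥0∞)) x} := by
    simp
  rw [heq]
  exact memL_stepf_mul hL (memL_one hL) hδ K hU t

end Fin

section Main

variable {L : Set (Set X)} {g : X → ℝ≥0∞} {μ : Set X → ℝ≥0∞}

lemma key_n (hL : IsLatt L) (hg : MemL L g) (hμ : IsVal L μ)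
    {h : X → ℝ≥0∞} (hh : MemL L h) (n : ℕ) :
    choquet (densF g μ) (approxL h n) = choquet μ (fun x => approxL h n x * g x) := by
  have hν : IsVal L (densF g μ) := isVal_densF hL hg hμ
  have hδ := dyd_pos n
  have hUL : ∀ k, UL h n k ∈ L := fun k => hh _
  have hRHS : choquet μ (fun x => approxL h n x * g x)
      = ∑ k ∈ Finset.Icc 1 (n * 2 ^ n), (dyd n : ℝ≥0∞) * densF g μ (UL h n k) := by
    calc choquet μ (fun x => approxL h n x * g x)
        = riem (fun t => μ (⋃ k ∈ Finset.Icc 1 (n * 2 ^ n),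
            (UL h n k ∩ {x | ((t / ((k : ℝ≥0) * dyd n) : ℝ≥0) : ℝ≥0∞) < g x}))) :=
          riem_congr fun t => congrArg μ (stepf_level hδ (n * 2 ^ n) (UL h n) g t)
      _ = ∑ k ∈ Finset.Icc 1 (n * 2 ^ n), (dyd n : ℝ≥0∞)
            * riem (fun t => μ (UL h n k ∩ {x | (t : ℝ≥0∞) < g x})) :=
          chain_int hL hμ hg hδ (UL h n) hUL (fun k => UL_chain h n k) (n * 2 ^ n)
      _ = _ := rfl
  have hLHS : choquet (densF g μ) (approxL h n)
      = ∑ k ∈ Finset.Icc 1 (n * 2 ^ n), (dyd n : ℝ≥0∞) * densF g μ (UL h n k) := by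
    have hset1 : ∀ t : ℝ≥0, {x | (t : ℝ≥0∞) < approxL h n x}
        = ⋃ k ∈ Finset.Icc 1 (n * 2 ^ n),
            (UL h n k ∩ {x | ((t / ((k : ℝ≥0) * dyd n) : ℝ≥0) : ℝ≥0∞)
              < (fun _ : X => (1 : ℝ≥0∞)) x}) := by
      intro t
      rw [← stepf_level hδ (n * 2 ^ n) (UL h n) (fun _ => (1 : ℝ≥0∞)) t]
      ext x
      simp only [approxL, mem_setOf_eq, mul_one]
    calc choquet (densF g μ) (approxL h n)
        = riem (fun t => densF g μ (⋃ k ∈ Finset.Icc 1 (n * 2 ^ n),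
            (UL h n k ∩ {x | ((t / ((k : ℝ≥0) * dyd n) : ℝ≥0) : ℝ≥0∞)
              < (fun _ : X => (1 : ℝ≥0∞)) x}))) :=
          riem_congr fun t => congrArg (densF g μ) (hset1 t)
      _ = ∑ k ∈ Finset.Icc 1 (n * 2 ^ n), (dyd n : ℝ≥0∞)
            * riem (fun t => densF g μ (UL h n k ∩ {x | (t : ℝ≥0∞)
                < (fun _ : X => (1 : ℝ≥0∞)) x})) :=
          chain_int hL hν (memL_one hL) hδ (UL h n) hUL (fun k => UL_chain h n k) (n * 2 ^ n)
      _ = ∑ k ∈ Finset.Icc 1 (n * 2 ^ n), (dyd n : ℝ≥0∞) * densF g μ (UL h n k) := by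
          refine Finset.sum_congr rfl fun k hk => ?_
          congr 1
          have hpt : ∀ t : ℝ≥0, densF g μ (UL h n k ∩ {x | (t : ℝ≥0∞)
              < (fun _ : X => (1 : ℝ≥0∞)) x})
              = if (t : ℝ≥0∞) < 1 then densF g μ (UL h n k) else 0 := by
            intro t
            by_cases ht : (t : ℝ≥0∞) < 1
            · rw [if_pos ht, show {x : X | (t : ℝ≥0∞) < (fun _ : X => (1 : ℝ≥0∞)) x} = univ from
                eq_univ_of_forall fun x => ht, inter_univ]
            · rw [if_neg ht, show {x : X | (t : ℝ≥0∞) < (fun _ : X => (1 : ℝ≥0∞)) x} = ∅ from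
                eq_empty_iff_forall_notMem.2 fun x hx => ht hx, inter_empty]
              exact hν.1
          rw [riem_congr hpt, riem_ind_one]
  rw [hLHS, hRHS]


end Main

end Step

end Stmt10Aux

/-- `g·μ` is an ω-continuous valuation and `∫ h d(g·μ) = ∫ h·g dμ`. -/
theorem stmt10 (L : Set (Set X)) (hL : IsOmegaTop L) (g : X → ℝ≥0∞) (hg : MemL L g)
    (μ : Set X → ℝ≥0∞) (hμ : IsVal L μ) (hμω : IsOmegaContVal L μ) :
    IsVal L (densMul g μ) ∧ IsOmegaContVal L (densMul g μ) ∧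
      ∀ h : X → ℝ≥0∞, MemL L h →
        choquet (densMul g μ) h = choquet μ (fun x => h x * g x) := by
  obtain ⟨hLatt, _⟩ := hL
  have hdmf : densMul g μ = densF g μ := funext fun U => densMul_eq_densF g μ U
  have hval := isVal_densF hLatt hg hμ
  have hω := omegaCont_densF hLatt hg hμ hμω
  refine ⟨hdmf ▸ hval, hdmf ▸ hω, ?_⟩
  intro h hh
  rw [hdmf]
  have hfL : ∀ n, MemL L (approxL h n) := fun n =>
    memL_stepf hLatt (dyd_pos n) _ (fun k => hh _)
  have hfgL : ∀ n, MemL L (fun x => approxL h n x * g x) := fun n =>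
    memL_stepf_mul hLatt hg (dyd_pos n) _ (fun k => hh _)
  have h1 : choquet (densF g μ) (fun x => ⨆ n, approxL h n x)
      = ⨆ n, choquet (densF g μ) (approxL h n) :=
    choquet_iSup hval hω hfL (fun n x => approxL_step h n x)
  have h1' : choquet (densF g μ) h = ⨆ n, choquet (densF g μ) (approxL h n) := by
    rw [← h1]
    congr 1
    funext x
    exact (iSup_approxL h x).symm
  have h2 : choquet μ (fun x => ⨆ n, (approxL h n x * g x))
      = ⨆ n, choquet μ (fun x => approxL h n x * g x) :=
    choquet_iSup hμ hμω hfgL (fun n x => mul_le_mul_left (approxL_step h n x) (g x))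
  have h2' : choquet μ (fun x => h x * g x)
      = ⨆ n, choquet μ (fun x => approxL h n x * g x) := by
    rw [← h2]
    congr 1
    funext x
    rw [← iSup_approxL h x, ENNReal.iSup_mul]
  rw [h1', h2']
  exact iSup_congr fun n => key_n hLatt hg hμ hh n
end

section
/- Let (X, L) be a Pervin space, μ and ν valuations on (X, L), and suppose ν = g·μ for some g ∈ 𝓛(X, L). Then ν is absolutely continuous with respect to μ: for every U₀ ∈ L with ν(U₀) < ∞ and every ε > 0, there exists η > 0 such that for every U ∈ L with U ⊆ U₀ and μ(U) < η, one has ν(U) < ε. -/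
open scoped ENNReal NNReal

variable {X : Type*}

/-- if `ν = g·μ` then ν is absolutely continuous with respect to μ. -/
theorem stmt14 (L : Set (Set X)) (hL : IsLatt L) (μ ν : Set X → ℝ≥0∞)
    (hμ : IsVal L μ) (hν : IsVal L ν) (g : X → ℝ≥0∞) (hg : MemL L g)
    (heq : ∀ U ∈ L, ν U = densF g μ U) :
    ∀ U₀ ∈ L, ν U₀ < ⊤ → ∀ ε : ℝ≥0, 0 < ε →
      ∃ η : ℝ≥0, 0 < η ∧ ∀ U ∈ L, U ⊆ U₀ → μ U < η → ν U < ε := by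
  intro U₀ hU₀ hνU₀ ε hε
  obtain ⟨hemp, hUniv, hcup, hcap⟩ := hL
  obtain ⟨hμ0, hμmono, hμmod⟩ := hμ
  classical
  set f₀ : ℝ → ℝ≥0∞ := fun t => μ (U₀ ∩ {x | (t.toNNReal : ℝ≥0∞) < g x}) with hf₀
  have hmemL : ∀ (U : Set X), U ∈ L → ∀ t : ℝ, U ∩ {x | (t.toNNReal : ℝ≥0∞) < g x} ∈ L :=
    fun U hU t => hcap U hU _ (hg t.toNNReal)
  have hanti : Antitone f₀ := by
    intro s t hst
    refine hμmono _ (hmemL _ hU₀ t) _ (hmemL _ hU₀ s) ?_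
    refine Set.inter_subset_inter_right _ fun x hx => ?_
    exact lt_of_le_of_lt (ENNReal.coe_le_coe.2 (Real.toNNReal_mono hst)) hx
  have hI : ∫⁻ t in Set.Ioi (0:ℝ), f₀ t < ⊤ := by
    have h := heq U₀ hU₀
    rw [densF, riem] at h
    exact h ▸ hνU₀
  set ρ : MeasureTheory.Measure ℝ := MeasureTheory.volume.withDensity f₀ with hρ
  have hρ_apply : ∀ (s : Set ℝ), MeasurableSet s → ρ s = ∫⁻ t in s, f₀ t :=
    fun s hs => MeasureTheory.withDensity_apply f₀ hs
  have htail : Filter.Tendsto (fun n : ℕ => ρ (Set.Ioi (n:ℝ))) Filter.atTop (nhds 0) := by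
    have h := MeasureTheory.tendsto_measure_iInter_atTop (μ := ρ)
      (s := fun n : ℕ => Set.Ioi (n:ℝ))
      (fun n => measurableSet_Ioi.nullMeasurableSet)
      (fun n m hnm => Set.Ioi_subset_Ioi (by exact_mod_cast hnm))
      ⟨0, by rw [hρ_apply _ measurableSet_Ioi]; simpa using hI.ne⟩
    have hempty : (⋂ n : ℕ, Set.Ioi ((n:ℝ))) = ∅ := by
      ext x
      simp only [Set.mem_iInter, Set.mem_Ioi, Set.mem_empty_iff_false, iff_false, not_forall,
        not_lt]
      exact exists_nat_ge x
    rw [hempty] at h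
    simpa [Function.comp_def] using h
  have hε2 : (0:ℝ≥0∞) < (ε:ℝ≥0∞) / 2 := ENNReal.div_pos (by exact_mod_cast hε.ne') (by norm_num)
  obtain ⟨n, hn⟩ := ((tendsto_order.1 htail).2 _ hε2).exists
  set N : ℕ := n + 1 with hN
  have hN0 : (0:ℝ) < (N:ℝ) := by positivity
  have hNnn : ((N:ℝ≥0)) ≠ 0 := by positivity
  have htailN : ρ (Set.Ioi ((N:ℝ))) < (ε:ℝ≥0∞) / 2 :=
    lt_of_le_of_lt (MeasureTheory.measure_mono (Set.Ioi_subset_Ioi (by exact_mod_cast Nat.le_succ n))) hn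
  refine ⟨(ε / 2) / (N : ℝ≥0), by positivity, ?_⟩
  intro U hU hUU₀ hμU
  set f : ℝ → ℝ≥0∞ := fun t => μ (U ∩ {x | (t.toNNReal : ℝ≥0∞) < g x}) with hf
  have hνUeq : ν U = ∫⁻ t in Set.Ioi (0:ℝ), f t := by
    rw [heq U hU, densF, riem]
  have hsplit : Set.Ioi (0:ℝ) = Set.Ioc (0:ℝ) (N:ℝ) ∪ Set.Ioi ((N:ℝ)) :=
    (Set.Ioc_union_Ioi_eq_Ioi hN0.le).symm
  have hunion : ∫⁻ t in Set.Ioi (0:ℝ), f t =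
      (∫⁻ t in Set.Ioc (0:ℝ) (N:ℝ), f t) + ∫⁻ t in Set.Ioi ((N:ℝ)), f t := by
    rw [hsplit, MeasureTheory.lintegral_union measurableSet_Ioi
      (Set.Ioc_disjoint_Ioi le_rfl)]
  have hpart1 : ∫⁻ t in Set.Ioc (0:ℝ) (N:ℝ), f t < (ε:ℝ≥0∞) / 2 := by
    have hle : ∫⁻ t in Set.Ioc (0:ℝ) (N:ℝ), f t ≤ ∫⁻ _ in Set.Ioc (0:ℝ) (N:ℝ), μ U := by
      refine MeasureTheory.lintegral_mono fun t => ?_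
      exact hμmono _ (hmemL _ hU t) _ hU Set.inter_subset_left
    rw [MeasureTheory.setLIntegral_const] at hle
    have hvol : MeasureTheory.volume (Set.Ioc (0:ℝ) (N:ℝ)) = (N : ℝ≥0∞) := by
      rw [Real.volume_Ioc]
      simp
    rw [hvol] at hle
    refine lt_of_le_of_lt hle ?_
    calc μ U * (N : ℝ≥0∞) < (((ε / 2) / (N : ℝ≥0) : ℝ≥0) : ℝ≥0∞) * (N : ℝ≥0∞) := by
          refine ENNReal.mul_lt_mul_left (a := (N : ℝ≥0∞)) (by exact_mod_cast hN0.ne') (by simp) ?_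
          exact hμU
      _ = (ε:ℝ≥0∞) / 2 := by
          rw [show ((N : ℝ≥0∞)) = ((N : ℝ≥0) : ℝ≥0∞) by simp, ← ENNReal.coe_mul,
            div_mul_cancel₀ _ hNnn, ENNReal.coe_div (by norm_num)]
          norm_num
  have hpart2 : ∫⁻ t in Set.Ioi ((N:ℝ)), f t < (ε:ℝ≥0∞) / 2 := by
    have hle : ∫⁻ t in Set.Ioi ((N:ℝ)), f t ≤ ρ (Set.Ioi ((N:ℝ))) := by
      rw [hρ_apply _ measurableSet_Ioi]
      refine MeasureTheory.lintegral_mono fun t => ?_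
      exact hμmono _ (hmemL _ hU t) _ (hmemL _ hU₀ t)
        (Set.inter_subset_inter_left _ hUU₀)
    exact lt_of_le_of_lt hle htailN
  calc ν U = (∫⁻ t in Set.Ioc (0:ℝ) (N:ℝ), f t) + ∫⁻ t in Set.Ioi ((N:ℝ)), f t := by
        rw [hνUeq, hunion]
    _ < (ε:ℝ≥0∞) / 2 + (ε:ℝ≥0∞) / 2 := ENNReal.add_lt_add hpart1 hpart2
    _ = ε := ENNReal.add_halves _
end

section
/- Let L be a lattice of subsets of X and ς : L → ℝ a signed valuation (ς(∅)=0 and ς(U∪V)+ς(U∩V)=ς(U)+ς(V) for all U,V ∈ L). Then ς extends to a unique signed valuation on the smallest algebra of subsets A(L) containing L, and the extension satisfies ς(U \ V) = ς(U) − ς(U ∩ V) = ς(U ∪ V) − ς(V) for all U, V ∈ L. -/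
open scoped ENNReal NNReal

variable {X : Type*}

/-- Real characteristic function. -/
noncomputable def chiR (U : Set X) : X → ℝ := U.indicator fun _ => 1

lemma chiR_of_mem {U : Set X} {x : X} (h : x ∈ U) : chiR U x = 1 :=
  Set.indicator_of_mem h _

lemma chiR_of_notMem {U : Set X} {x : X} (h : x ∉ U) : chiR U x = 0 :=
  Set.indicator_of_notMem h _

lemma chiR_inter (U V : Set X) (x : X) : chiR (U ∩ V) x = chiR U x * chiR V x := by
  by_cases hU : x ∈ U <;> by_cases hV : x ∈ V <;>
    simp [chiR, Set.indicator_apply, hU, hV, Set.mem_inter_iff]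

lemma chiR_union (U V : Set X) (x : X) :
    chiR (U ∪ V) x = chiR U x + chiR V x - chiR (U ∩ V) x := by
  by_cases hU : x ∈ U <;> by_cases hV : x ∈ V <;>
    simp [chiR, Set.indicator_apply, hU, hV, Set.mem_inter_iff, Set.mem_union]

lemma chiR_diff (U V : Set X) (x : X) :
    chiR (U \ V) x = chiR U x - chiR (U ∩ V) x := by
  by_cases hU : x ∈ U <;> by_cases hV : x ∈ V <;>
    simp [chiR, Set.indicator_apply, hU, hV, Set.mem_inter_iff, Set.mem_diff]

lemma chiR_compl (S : Set X) (x : X) :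
    chiR (Sᶜ) x = chiR (Set.univ) x - chiR S x := by
  by_cases hS : x ∈ S <;>
    simp [chiR, Set.indicator_apply, hS]

lemma biUnion_mem {L : Set (Set X)} (hL : IsLatt L) {ι : Type*} [DecidableEq ι]
    (B : ι → Set X) (hB : ∀ i, B i ∈ L) (s : Finset ι) : (⋃ j ∈ s, B j) ∈ L := by
  classical
  induction s using Finset.induction_on with
  | empty => simpa using hL.1
  | @insert k s hk ih =>
      rw [Finset.set_biUnion_insert]
      exact hL.2.2.1 _ (hB k) _ ih

lemma biInter_mem {L : Set (Set X)} (hL : IsLatt L) {ι : Type*} [DecidableEq ι]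
    (B : ι → Set X) (hB : ∀ i, B i ∈ L) (s : Finset ι) : (⋂ j ∈ s, B j) ∈ L := by
  classical
  induction s using Finset.induction_on with
  | empty => simpa using hL.2.1
  | @insert k s hk ih =>
      rw [Finset.set_biInter_insert]
      exact hL.2.2.2 _ (hB k) _ ih

/-- Inclusion–exclusion for a signed valuation on a lattice of sets. -/
lemma sht_IE {L : Set (Set X)} (hL : IsLatt L) {sg : Set X → ℝ} (hsg : IsSignedVal L sg)
    {ι : Type*} [DecidableEq ι] (B : ι → Set X) (hB : ∀ i, B i ∈ L) (s : Finset ι) :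
    ∀ A ∈ L, ∑ e ∈ s.powerset, (-1 : ℝ) ^ e.card * sg (A ∩ ⋂ j ∈ e, B j)
      = sg A - sg (A ∩ ⋃ j ∈ s, B j) := by
  classical
  induction s using Finset.induction_on with
  | empty =>
      intro A hA
      simp [hsg.1]
  | @insert k s hk ih =>
      intro A hA
      rw [Finset.sum_powerset_insert hk]
      have e2 : ∀ e ∈ s.powerset, (-1 : ℝ) ^ (insert k e).card * sg (A ∩ ⋂ j ∈ insert k e, B j)
          = -((-1 : ℝ) ^ e.card * sg ((A ∩ B k) ∩ ⋂ j ∈ e, B j)) := by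
        intro e he
        have hke : k ∉ e := fun h => hk (Finset.mem_powerset.1 he h)
        rw [Finset.card_insert_of_notMem hke, Finset.set_biInter_insert,
          ← Set.inter_assoc, pow_succ]
        ring
      rw [Finset.sum_congr rfl e2]
      have hBk : A ∩ B k ∈ L := hL.2.2.2 _ hA _ (hB k)
      have hUn : (⋃ j ∈ s, B j) ∈ L := biUnion_mem hL B hB s
      have hQ : A ∩ ⋃ j ∈ s, B j ∈ L := hL.2.2.2 _ hA _ hUn
      have hmod := hsg.2 (A ∩ B k) hBk (A ∩ ⋃ j ∈ s, B j) hQ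
      have hu : (A ∩ B k) ∪ (A ∩ ⋃ j ∈ s, B j) = A ∩ ⋃ j ∈ insert k s, B j := by
        rw [Finset.set_biUnion_insert, Set.inter_union_distrib_left]
      have hi : (A ∩ B k) ∩ (A ∩ ⋃ j ∈ s, B j) = (A ∩ B k) ∩ ⋃ j ∈ s, B j := by
        ext x
        simp only [Set.mem_inter_iff]
        tauto
      rw [hu, hi] at hmod
      have hih1 := ih A hA
      have hih2 := ih (A ∩ B k) hBk
      rw [Finset.sum_neg_distrib, hih1, hih2]
      linarith

/-- Möbius-type cancellation identity over finsets. -/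
lemma sht_mob {ι : Type*} [DecidableEq ι] (f : Finset ι → ℝ) (s : Finset ι) :
    ∑ c ∈ s.powerset, ∑ e ∈ (s \ c).powerset, (-1 : ℝ) ^ e.card * f (c ∪ e) = f ∅ := by
  classical
  induction s using Finset.induction_on with
  | empty => simp
  | @insert a s ha ih =>
      rw [Finset.sum_powerset_insert ha]
      have h1 : ∀ c ∈ s.powerset,
          (∑ e ∈ (insert a s \ c).powerset, (-1 : ℝ) ^ e.card * f (c ∪ e))
          = (∑ e ∈ (s \ c).powerset, (-1 : ℝ) ^ e.card * f (c ∪ e))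
            - ∑ e ∈ (s \ c).powerset, (-1 : ℝ) ^ e.card * f (insert a (c ∪ e)) := by
        intro c hc
        have hac : a ∉ c := fun h => ha (Finset.mem_powerset.1 hc h)
        have hset : insert a s \ c = insert a (s \ c) := by
          ext x
          simp only [Finset.mem_sdiff, Finset.mem_insert]
          constructor
          · rintro ⟨h | h, h2⟩
            · exact Or.inl h
            · exact Or.inr ⟨h, h2⟩
          · rintro (rfl | ⟨h1, h2⟩)
            · exact ⟨Or.inl rfl, hac⟩
            · exact ⟨Or.inr h1, h2⟩
        have has : a ∉ s \ c := fun h => ha (Finset.mem_sdiff.1 h).1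
        rw [hset, Finset.sum_powerset_insert has]
        have : ∀ e ∈ (s \ c).powerset, (-1 : ℝ) ^ (insert a e).card * f (c ∪ insert a e)
            = -((-1 : ℝ) ^ e.card * f (insert a (c ∪ e))) := by
          intro e he
          have hae : a ∉ e := fun h => has (Finset.mem_powerset.1 he h)
          rw [Finset.card_insert_of_notMem hae, Finset.union_insert, pow_succ]
          ring
        rw [Finset.sum_congr rfl this, Finset.sum_neg_distrib]
        ring
      have h2 : ∀ c ∈ s.powerset,
          (∑ e ∈ (insert a s \ insert a c).powerset, (-1 : ℝ) ^ e.card * f (insert a c ∪ e))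
          = ∑ e ∈ (s \ c).powerset, (-1 : ℝ) ^ e.card * f (insert a (c ∪ e)) := by
        intro c hc
        have hac : a ∉ c := fun h => ha (Finset.mem_powerset.1 hc h)
        have hset : insert a s \ insert a c = s \ c := by
          ext x
          simp only [Finset.mem_sdiff, Finset.mem_insert, not_or]
          constructor
          · rintro ⟨h | h, h2, h3⟩
            · exact absurd h h2
            · exact ⟨h, h3⟩
          · rintro ⟨h1, h2⟩
            refine ⟨Or.inr h1, fun hx => ?_, h2⟩
            exact ha (hx ▸ h1)
        rw [hset]
        refine Finset.sum_congr rfl fun e he => ?_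
        rw [Finset.insert_union]
      rw [Finset.sum_congr rfl h1, Finset.sum_congr rfl h2, Finset.sum_sub_distrib]
      rw [sub_add_cancel]
      exact ih

/-- KEY LEMMA: a linear relation among characteristic functions of lattice sets
transfers to any signed valuation. -/
lemma sht_key {L : Set (Set X)} (hL : IsLatt L) {sg : Set X → ℝ} (hsg : IsSignedVal L sg)
    {ι : Type*} [Fintype ι] [DecidableEq ι] (U : ι → Set X) (hU : ∀ i, U i ∈ L) (a : ι → ℝ)
    (hrel : ∀ x, ∑ i, a i * chiR (U i) x = 0) :
    ∑ i, a i * sg (U i) = 0 := by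
  classical
  have hNmem : ∀ t : Finset ι, (⋂ j ∈ t, U j) ∈ L := fun t => biInter_mem hL U hU t
  set M : Finset ι → ℝ :=
    fun r => ∑ e ∈ rᶜ.powerset, (-1 : ℝ) ^ e.card * sg (⋂ j ∈ r ∪ e, U j) with hM
  -- Möbius inversion: ∑_{c ⊆ tᶜ} M (t ∪ c) = sg (⋂_{j∈t} U j)
  have mobT : ∀ t : Finset ι, ∑ c ∈ tᶜ.powerset, M (t ∪ c) = sg (⋂ j ∈ t, U j) := by
    intro t
    have hmb := sht_mob (fun w => sg (⋂ j ∈ t ∪ w, U j)) tᶜ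
    simp only [Finset.union_empty] at hmb
    rw [← hmb]
    refine Finset.sum_congr rfl fun c hc => ?_
    have hcc : (t ∪ c)ᶜ = tᶜ \ c := by
      ext j
      simp only [Finset.mem_compl, Finset.mem_sdiff, Finset.mem_union, not_or]
    rw [hM]
    simp only
    rw [hcc]
    refine Finset.sum_congr rfl fun e he => ?_
    rw [Finset.union_assoc]
  -- rewrite sg (U i) via mobT {i}
  have h1 : ∀ i : ι, sg (U i) = ∑ c ∈ ({i} : Finset ι)ᶜ.powerset, M (insert i c) := by
    intro i
    have := mobT {i}
    rw [Finset.set_biInter_singleton] at this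
    rw [← this]
    refine Finset.sum_congr rfl fun c hc => ?_
    rw [← Finset.insert_eq]
  calc ∑ i, a i * sg (U i)
      = ∑ i, ∑ c ∈ ({i} : Finset ι)ᶜ.powerset, a i * M (insert i c) := by
        refine Finset.sum_congr rfl fun i _ => ?_
        rw [h1 i, Finset.mul_sum]
    _ = ∑ i, ∑ r ∈ Finset.univ.powerset, if i ∈ r then a i * M r else 0 := by
        refine Finset.sum_congr rfl fun i _ => ?_
        rw [← Finset.sum_filter]
        refine Finset.sum_nbij' (fun c => insert i c) (fun r => r.erase i) ?_ ?_ ?_ ?_ ?_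
        · intro c hc
          simp only [Finset.mem_filter, Finset.mem_powerset]
          exact ⟨Finset.subset_univ _, Finset.mem_insert_self i c⟩
        · intro r hr
          simp only [Finset.mem_powerset]
          intro x hx
          simp only [Finset.mem_compl, Finset.mem_singleton]
          exact (Finset.mem_erase.1 hx).1
        · intro c hc
          have : i ∉ c := by
            have := Finset.mem_powerset.1 hc
            intro h
            simpa using this h
          show (insert i c).erase i = c
          rw [Finset.erase_insert this]
        · intro r hr
          have : i ∈ r := (Finset.mem_filter.1 hr).2
          show insert i (r.erase i) = r
          rw [Finset.insert_erase this]
        · intro c hc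
          rfl
    _ = ∑ r ∈ Finset.univ.powerset, (∑ i ∈ r, a i) * M r := by
        rw [Finset.sum_comm]
        refine Finset.sum_congr rfl fun r _ => ?_
        rw [Finset.sum_ite_mem, Finset.univ_inter, Finset.sum_mul]
    _ = 0 := by
        refine Finset.sum_eq_zero fun r _ => ?_
        by_cases hx : ∃ x, ∀ i, x ∈ U i ↔ i ∈ r
        · obtain ⟨x, hxx⟩ := hx
          have hterm : ∀ i : ι, a i * chiR (U i) x = if i ∈ r then a i else 0 := by
            intro i
            by_cases h : i ∈ r
            · rw [if_pos h, chiR_of_mem ((hxx i).mpr h), mul_one]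
            · rw [if_neg h, chiR_of_notMem (fun hm => h ((hxx i).mp hm)), mul_zero]
          have h0 := hrel x
          rw [Finset.sum_congr rfl (fun i _ => hterm i), Finset.sum_ite_mem,
            Finset.univ_inter] at h0
          rw [h0, zero_mul]
        · push_neg at hx
          have hsub : (⋂ j ∈ r, U j) ⊆ ⋃ j ∈ (rᶜ : Finset ι), U j := by
            intro x hxN
            obtain ⟨i, hi⟩ := hx x
            rcases hi with ⟨hxU, hir⟩ | ⟨hxU, hir⟩
            · exact Set.mem_iUnion₂.2 ⟨i, Finset.mem_compl.2 hir, hxU⟩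
            · exact absurd (Set.mem_iInter₂.1 hxN i hir) hxU
          have hIE := sht_IE hL hsg U hU (rᶜ : Finset ι) (⋂ j ∈ r, U j) (hNmem r)
          rw [Set.inter_eq_self_of_subset_left hsub, sub_self] at hIE
          have hMr : M r = 0 := by
            rw [hM]
            simp only
            rw [← hIE]
            refine Finset.sum_congr rfl fun e he => ?_
            congr 2
            ext x
            simp only [Set.mem_inter_iff, Set.mem_iInter, Finset.mem_union]
            exact ⟨fun h => ⟨fun j hj => h j (Or.inl hj), fun j hj => h j (Or.inr hj)⟩,
              fun h j hj => hj.elim (h.1 j) (h.2 j)⟩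
          rw [hMr, mul_zero]

/-- A representation of `C` as a linear combination of characteristic functions of sets in `L`. -/
def RepP (L : Set (Set X)) (C : Set X) (p : Σ n : ℕ, (Fin n → Set X) × (Fin n → ℝ)) : Prop :=
  (∀ i, p.2.1 i ∈ L) ∧ ∀ x, chiR C x = ∑ i, p.2.2 i * chiR (p.2.1 i) x

open Classical in
/-- The extension of `sg` to all representable sets. -/
noncomputable def extV (L : Set (Set X)) (sg : Set X → ℝ) (C : Set X) : ℝ :=
  if h : ∃ p, RepP L C p then ∑ i, h.choose.2.2 i * sg (h.choose.2.1 i) else 0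

lemma rep_of {L : Set (Set X)} {ι : Type} [Fintype ι] (U : ι → Set X) (hU : ∀ i, U i ∈ L)
    (a : ι → ℝ) (C : Set X) (h : ∀ x, chiR C x = ∑ i, a i * chiR (U i) x) :
    ∃ p, RepP L C p := by
  refine ⟨⟨Fintype.card ι, U ∘ (Fintype.equivFin ι).symm, a ∘ (Fintype.equivFin ι).symm⟩,
    fun i => hU _, fun x => ?_⟩
  rw [h x]
  exact Fintype.sum_equiv (Fintype.equivFin ι) _ _ (fun j => by simp)

lemma ext_eq {L : Set (Set X)} (hL : IsLatt L) {sg : Set X → ℝ} (hsg : IsSignedVal L sg)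
    {ι : Type} [Fintype ι] (U : ι → Set X) (hU : ∀ i, U i ∈ L) (a : ι → ℝ) (C : Set X)
    (h : ∀ x, chiR C x = ∑ i, a i * chiR (U i) x) :
    extV L sg C = ∑ i, a i * sg (U i) := by
  classical
  have hex := rep_of U hU a C h
  rw [extV, dif_pos hex]
  obtain ⟨hq1, hq2⟩ := hex.choose_spec
  have hkey := sht_key hL hsg (ι := Fin hex.choose.1 ⊕ ι)
    (Sum.elim hex.choose.2.1 U)
    (by rintro (i | i); exacts [hq1 i, hU i])
    (Sum.elim hex.choose.2.2 (fun i => -a i))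
    (fun x => by
      rw [Fintype.sum_sum_type]
      simp only [Sum.elim_inl, Sum.elim_inr]
      have hA := hq2 x
      have hB := h x
      have hneg : ∑ i : ι, -a i * chiR (U i) x = -∑ i : ι, a i * chiR (U i) x := by
        rw [← Finset.sum_neg_distrib]
        exact Finset.sum_congr rfl fun i _ => by ring
      rw [hneg, ← hA, ← hB]
      ring)
  rw [Fintype.sum_sum_type] at hkey
  simp only [Sum.elim_inl, Sum.elim_inr] at hkey
  have hneg : ∑ i : ι, -a i * sg (U i) = -∑ i : ι, a i * sg (U i) := by
    rw [← Finset.sum_neg_distrib]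
    exact Finset.sum_congr rfl fun i _ => by ring
  rw [hneg] at hkey
  linarith

lemma ext_mem {L : Set (Set X)} (hL : IsLatt L) {sg : Set X → ℝ} (hsg : IsSignedVal L sg)
    {U : Set X} (hU : U ∈ L) : extV L sg U = sg U := by
  have := ext_eq hL hsg (ι := Unit) (fun _ => U) (fun _ => hU) (fun _ => 1) U
    (fun x => by simp)
  rw [this]
  simp

lemma ext_empty {L : Set (Set X)} (hL : IsLatt L) {sg : Set X → ℝ}
    (hsg : IsSignedVal L sg) : extV L sg ∅ = 0 := by
  have := ext_eq hL hsg (ι := Fin 0) (fun i => i.elim0) (fun i => i.elim0) (fun i => 0) ∅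
    (fun x => by simp [chiR])
  rw [this]
  simp

lemma rep_inter {L : Set (Set X)} (hL : IsLatt L) {C D : Set X}
    (hC : ∃ p, RepP L C p) (hD : ∃ p, RepP L D p) : ∃ p, RepP L (C ∩ D) p := by
  obtain ⟨⟨n, U, a⟩, hU, hCx⟩ := hC
  obtain ⟨⟨m, V, b⟩, hV, hDx⟩ := hD
  refine rep_of (ι := Fin n × Fin m) (fun ij => U ij.1 ∩ V ij.2)
    (fun ij => hL.2.2.2 _ (hU ij.1) _ (hV ij.2)) (fun ij => a ij.1 * b ij.2) _ fun x => ?_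
  rw [chiR_inter, hCx x, hDx x, Finset.sum_mul_sum, Fintype.sum_prod_type]
  refine Finset.sum_congr rfl fun i _ => Finset.sum_congr rfl fun j _ => ?_
  rw [chiR_inter]
  ring

lemma rep_genAlg {L : Set (Set X)} (hL : IsLatt L) {C : Set X} (hC : C ∈ genAlg L) :
    ∃ p, RepP L C p := by
  refine hC {S | ∃ p, RepP L S p} ⟨?_, ?_, ?_, ?_⟩
  · intro U hU
    exact rep_of (ι := Unit) (fun _ => U) (fun _ => hU) (fun _ => 1) U (fun x => by simp)
  · exact rep_of (ι := Fin 0) (fun i => i.elim0) (fun i => i.elim0) (fun i => 0) ∅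
      (fun x => by simp [chiR])
  · rintro S ⟨⟨n, U, a⟩, hU, hSx⟩
    refine rep_of (ι := Unit ⊕ Fin n) (Sum.elim (fun _ => Set.univ) U)
      (by rintro (_ | i); exacts [hL.2.1, hU i]) (Sum.elim (fun _ => 1) (fun i => -a i)) _
      fun x => ?_
    rw [Fintype.sum_sum_type]
    simp only [Sum.elim_inl, Sum.elim_inr]
    have hneg : ∑ i : Fin n, -a i * chiR (U i) x = -∑ i : Fin n, a i * chiR (U i) x := by
      rw [← Finset.sum_neg_distrib]
      exact Finset.sum_congr rfl fun i _ => by ring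
    rw [hneg, ← hSx x, chiR_compl]
    simp only [one_mul, Finset.univ_unique, Finset.sum_singleton]
    ring
  · intro S hS T hT
    obtain ⟨⟨k, W, c⟩, hW, hIx⟩ := rep_inter hL hS hT
    obtain ⟨⟨n, U, a⟩, hU, hSx⟩ := hS
    obtain ⟨⟨m, V, b⟩, hV, hTx⟩ := hT
    refine rep_of (ι := (Fin n ⊕ Fin m) ⊕ Fin k)
      (Sum.elim (Sum.elim U V) W)
      (by rintro ((i | i) | i); exacts [hU i, hV i, hW i])
      (Sum.elim (Sum.elim a b) (fun i => -c i)) _ fun x => ?_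
    rw [Fintype.sum_sum_type, Fintype.sum_sum_type]
    simp only [Sum.elim_inl, Sum.elim_inr]
    have hneg : ∑ i : Fin k, -c i * chiR (W i) x = -∑ i : Fin k, c i * chiR (W i) x := by
      rw [← Finset.sum_neg_distrib]
      exact Finset.sum_congr rfl fun i _ => by ring
    rw [hneg, ← hSx x, ← hTx x, ← hIx x, chiR_union]
    ring

lemma sht_L_sub_genAlg {L : Set (Set X)} : L ⊆ genAlg L :=
  fun _ hU _ hA => hA.1 hU

lemma sht_genAlg_latt (L : Set (Set X)) : IsLatt (genAlg L) := by
  have hemp : (∅ : Set X) ∈ genAlg L := fun _ hA => hA.2.1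
  have hcompl : ∀ S ∈ genAlg L, Sᶜ ∈ genAlg L := fun S hS A hA => hA.2.2.1 _ (hS A hA)
  have hunion : ∀ S ∈ genAlg L, ∀ T ∈ genAlg L, S ∪ T ∈ genAlg L :=
    fun S hS T hT A hA => hA.2.2.2 _ (hS A hA) _ (hT A hA)
  refine ⟨hemp, ?_, hunion, ?_⟩
  · have := hcompl _ hemp
    rwa [Set.compl_empty] at this
  · intro S hS T hT
    have := hcompl _ (hunion _ (hcompl _ hS) _ (hcompl _ hT))
    rwa [Set.compl_union, compl_compl, compl_compl] at this

lemma ext_modular {L : Set (Set X)} (hL : IsLatt L) {sg : Set X → ℝ}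
    (hsg : IsSignedVal L sg) {C D : Set X} (hC : ∃ p, RepP L C p) (hD : ∃ p, RepP L D p) :
    extV L sg (C ∪ D) + extV L sg (C ∩ D) = extV L sg C + extV L sg D := by
  obtain ⟨⟨k, W, c⟩, hW, hIx⟩ := rep_inter hL hC hD
  obtain ⟨⟨n, U, a⟩, hU, hCx⟩ := hC
  obtain ⟨⟨m, V, b⟩, hV, hDx⟩ := hD
  have hEC : extV L sg C = ∑ i, a i * sg (U i) := ext_eq hL hsg U hU a C hCx
  have hED : extV L sg D = ∑ i, b i * sg (V i) := ext_eq hL hsg V hV b D hDx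
  have hEI : extV L sg (C ∩ D) = ∑ i, c i * sg (W i) := ext_eq hL hsg W hW c _ hIx
  have hEU : extV L sg (C ∪ D)
      = ∑ i : (Fin n ⊕ Fin m) ⊕ Fin k,
          (Sum.elim (Sum.elim a b) (fun i => -c i)) i *
            sg ((Sum.elim (Sum.elim U V) W) i) := by
    refine ext_eq hL hsg _ (by rintro ((i | i) | i); exacts [hU i, hV i, hW i]) _ _ fun x => ?_
    rw [Fintype.sum_sum_type, Fintype.sum_sum_type]
    simp only [Sum.elim_inl, Sum.elim_inr]
    have hneg : ∑ i : Fin k, -c i * chiR (W i) x = -∑ i : Fin k, c i * chiR (W i) x := by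
      rw [← Finset.sum_neg_distrib]
      exact Finset.sum_congr rfl fun i _ => by ring
    rw [hneg, ← hCx x, ← hDx x, ← hIx x, chiR_union]
    ring
  rw [Fintype.sum_sum_type, Fintype.sum_sum_type] at hEU
  simp only [Sum.elim_inl, Sum.elim_inr] at hEU
  have hneg : ∑ i : Fin k, -c i * sg (W i) = -∑ i : Fin k, c i * sg (W i) := by
    rw [← Finset.sum_neg_distrib]
    exact Finset.sum_congr rfl fun i _ => by ring
  rw [hneg] at hEU
  rw [hEC, hED, hEI, hEU]
  ring

/-- signed Smiley–Horn–Tarski: every signed valuation on `(X, L)` extends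
to a unique signed valuation on the generated algebra `A(L)`, and the extension satisfies
`ς(U \ V) = ς(U) − ς(U ∩ V) = ς(U ∪ V) − ς(V)`. -/
theorem stmt15 (L : Set (Set X)) (hL : IsLatt L) (sg : Set X → ℝ)
    (hsg : IsSignedVal L sg) :
    (∃ sg' : Set X → ℝ, (∀ U ∈ L, sg' U = sg U) ∧ IsSignedVal (genAlg L) sg' ∧
        ∀ U ∈ L, ∀ V ∈ L,
          sg' (U \ V) = sg' U - sg' (U ∩ V) ∧ sg' (U \ V) = sg' (U ∪ V) - sg' V) ∧
      ∀ sg₁ sg₂ : Set X → ℝ,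
        (∀ U ∈ L, sg₁ U = sg U) → IsSignedVal (genAlg L) sg₁ →
        (∀ U ∈ L, sg₂ U = sg U) → IsSignedVal (genAlg L) sg₂ →
        ∀ C ∈ genAlg L, sg₁ C = sg₂ C := by
  classical
  constructor
  · refine ⟨extV L sg, fun U hU => ext_mem hL hsg hU, ⟨ext_empty hL hsg, ?_⟩, ?_⟩
    · intro C hC D hD
      exact ext_modular hL hsg (rep_genAlg hL hC) (rep_genAlg hL hD)
    · intro U hU V hV
      have hUV : U ∩ V ∈ L := hL.2.2.2 _ hU _ hV
      have hUuV : U ∪ V ∈ L := hL.2.2.1 _ hU _ hV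
      have h1 : extV L sg (U \ V) = sg U - sg (U ∩ V) := by
        have := ext_eq hL hsg (ι := Bool)
          (fun b => if b then U else U ∩ V) (fun b => by cases b <;> simpa)
          (fun b => if b then 1 else -1) (U \ V)
          (fun x => by
            rw [Fintype.sum_bool, chiR_diff]
            norm_num
            ring)
        rw [this, Fintype.sum_bool]
        norm_num
        ring
      constructor
      · rw [h1, ext_mem hL hsg hU, ext_mem hL hsg hUV]
      · rw [h1, ext_mem hL hsg hUuV, ext_mem hL hsg hV]
        have := hsg.2 U hU V hV
        linarith
  · intro sg₁ sg₂ h1 hv1 h2 hv2 C hC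
    obtain ⟨⟨n, U, a⟩, hU, hCx⟩ := rep_genAlg hL hC
    have key : ∀ t : Set X → ℝ, IsSignedVal (genAlg L) t → (∀ V ∈ L, t V = sg V) →
        t C = ∑ i, a i * sg (U i) := by
      intro t ht hagree
      have hkey := sht_key (sht_genAlg_latt L) ht (ι := Unit ⊕ Fin n)
        (Sum.elim (fun _ => C) U)
        (by rintro (_ | i); exacts [hC, sht_L_sub_genAlg (hU i)])
        (Sum.elim (fun _ => 1) (fun i => -a i))
        (fun x => by
          rw [Fintype.sum_sum_type]
          simp only [Sum.elim_inl, Sum.elim_inr]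
          have hneg : ∑ i : Fin n, -a i * chiR (U i) x
              = -∑ i : Fin n, a i * chiR (U i) x := by
            rw [← Finset.sum_neg_distrib]
            exact Finset.sum_congr rfl fun i _ => by ring
          rw [hneg, ← hCx x]
          simp)
      rw [Fintype.sum_sum_type] at hkey
      simp only [Sum.elim_inl, Sum.elim_inr] at hkey
      have hneg : ∑ i : Fin n, -a i * t (U i) = -∑ i : Fin n, a i * t (U i) := by
        rw [← Finset.sum_neg_distrib]
        exact Finset.sum_congr rfl fun i _ => by ring
      rw [hneg] at hkey
      have hsum : ∑ i : Fin n, a i * t (U i) = ∑ i : Fin n, a i * sg (U i) :=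
        Finset.sum_congr rfl fun i _ => by rw [hagree _ (hU i)]
      simp only [Finset.univ_unique, Finset.sum_singleton, one_mul] at hkey
      rw [hsum] at hkey
      linarith
    rw [key sg₁ hv1 h1, key sg₂ hv2 h2]
end
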